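/- arXiv:2302.00097 — 5 statements merged into one kernel-verified Lean document; each statement's English description precedes it below -/
import Mathlib

section
/- Let t > 0 and let W be a random continuous function on [0, t] (a stochastic process on a probability space with almost surely continuous sample paths). Suppose there exist constants α, β > 0 such that for all m > 0 and all 0 ≤ s ≤ s + r ≤ t, one has P(|W(s) − W(s + r)| > m·√r) ≤ α·exp(−β·m²). Then for every m ≥ 20/√β, P( sup_{0 ≤ s ≤ s + r ≤ t} |W(s) − W(s + r)| ≥ m·√t ) ≤ 2α·exp(−β·m²/64). -/
open MeasureTheory Filter


lemma exp_lb (y : ℝ) (hy : 0 ≤ y) : (1 + y / 8) ^ 8 ≤ Real.exp y := by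
  have h1 : 1 + y / 8 ≤ Real.exp (y / 8) := by
    have := Real.add_one_le_exp (y / 8); linarith
  have h2 : (1 + y / 8) ^ 8 ≤ Real.exp (y / 8) ^ 8 :=
    pow_le_pow_left₀ (by positivity) h1 8
  calc (1 + y / 8) ^ 8 ≤ Real.exp (y / 8) ^ 8 := h2
    _ = Real.exp (8 * (y / 8)) := by rw [← Real.exp_nat_mul]; norm_num
    _ = Real.exp y := by congr 1; ring

lemma exp_neg_le_of (a b : ℝ) (ha : 0 ≤ a) (hb : 0 < b) (h : 1 / b ≤ (1 + a / 8) ^ 8) :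
    Real.exp (-a) ≤ b := by
  have h1 := exp_lb a ha
  have h2 : 1 / b ≤ Real.exp a := le_trans h h1
  have h5 : 1 ≤ Real.exp a * b := (div_le_iff₀ hb).mp h2
  have h3 : Real.exp (-a) * Real.exp a = 1 := by
    rw [← Real.exp_add]; simp
  have h4 := Real.exp_pos a
  nlinarith [Real.exp_pos (-a)]

lemma pow98 (n : ℕ) (hn : 1 ≤ n) : (63 + 9 * (n : ℝ)) ≤ 64 * (9 / 8) ^ n := by
  induction n with
  | zero => omega
  | succ k ih =>
    rcases Nat.eq_or_lt_of_le hn with h | h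
    · rw [← h]; norm_num
    · have hk : 1 ≤ k := by omega
      have ihk := ih hk
      have hk' : (1:ℝ) ≤ (k:ℝ) := by exact_mod_cast hk
      have h8 : (64:ℝ) * (9/8)^(k+1) = (9/8) * (64 * (9/8)^k) := by ring
      rw [h8]
      push_cast
      linarith


lemma chain_det (t : ℝ) (ht : 0 < t) (f : ℝ → ℝ)
    (hf : ContinuousOn f (Set.Icc 0 t))
    (x : ℕ → ℝ) (hx : ∀ n, 0 ≤ x n) (T : ℝ)
    (hT : ∀ N : ℕ, ∑ n ∈ Finset.range N, x (n + 1) ≤ T)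
    (hgrid : ∀ n k : ℕ, k < 2 ^ n →
      |f ((k : ℝ) * t / 2 ^ n) - f ((k : ℝ) * t / 2 ^ n + t / 2 ^ n)| ≤ x n)
    (u : ℝ) (hu0 : 0 ≤ u) (hut : u ≤ t) :
    |f u - f ((⌊u / t⌋₊ : ℝ) * t)| ≤ T := by
  have ht' : t ≠ 0 := ne_of_gt ht
  set p : ℕ → ℝ := fun n => (⌊u * 2 ^ n / t⌋₊ : ℝ) * t / 2 ^ n with hpdef
  have hpe : ∀ n, p n = (⌊u * 2 ^ n / t⌋₊ : ℝ) * t / 2 ^ n := fun n => rfl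
  have hp0 : p 0 = (⌊u / t⌋₊ : ℝ) * t := by simp [hpe]
  have hple : ∀ n, p n ≤ u := by
    intro n
    have h1 : (⌊u * 2 ^ n / t⌋₊ : ℝ) ≤ u * 2 ^ n / t := Nat.floor_le (by positivity)
    have h2 : (0:ℝ) < (2:ℝ) ^ n := by positivity
    have h3 : (⌊u * 2 ^ n / t⌋₊ : ℝ) * t ≤ (u * 2 ^ n / t) * t :=
      mul_le_mul_of_nonneg_right h1 ht.le
    have h4 : (u * 2 ^ n / t) * t = u * 2 ^ n := by field_simp
    rw [hpe, div_le_iff₀ h2]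
    linarith
  have hppos : ∀ n, 0 ≤ p n := fun n => by rw [hpe]; positivity
  have hplt : ∀ n, u < p n + t / 2 ^ n := by
    intro n
    have h1 : u * 2 ^ n / t < (⌊u * 2 ^ n / t⌋₊ : ℝ) + 1 := Nat.lt_floor_add_one _
    have h2 : (0:ℝ) < t / 2 ^ n := by positivity
    have h3 := mul_lt_mul_of_pos_right h1 h2
    have hl : u * 2 ^ n / t * (t / 2 ^ n) = u := by field_simp
    have hr : ((⌊u * 2 ^ n / t⌋₊ : ℝ) + 1) * (t / 2 ^ n) = p n + t / 2 ^ n := by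
      rw [hpe]; ring
    rw [hl, hr] at h3
    exact h3
  -- p tends to u
  have htend : Tendsto p atTop (nhds u) := by
    have hgeo : Tendsto (fun n : ℕ => t / 2 ^ n) atTop (nhds 0) := by
      have : Tendsto (fun n : ℕ => t * (1/2 : ℝ) ^ n) atTop (nhds (t * 0)) :=
        (tendsto_pow_atTop_nhds_zero_of_lt_one (by norm_num) (by norm_num)).const_mul t
      simpa [div_eq_mul_inv, inv_pow] using this
    have hlow : Tendsto (fun n : ℕ => u - t / 2 ^ n) atTop (nhds (u - 0)) :=
      tendsto_const_nhds.sub hgeo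
    rw [sub_zero] at hlow
    refine tendsto_of_tendsto_of_tendsto_of_le_of_le hlow tendsto_const_nhds
      (fun n => by have := hplt n; linarith) (fun n => hple n)
  have hstep : ∀ n, |f (p (n + 1)) - f (p n)| ≤ x (n + 1) := by
    intro n
    have hj : ⌊u * 2 ^ n / t⌋₊ = ⌊u * 2 ^ (n+1) / t⌋₊ / 2 := by
      rw [show u * 2 ^ n / t = u * 2 ^ (n+1) / t / ((2:ℕ):ℝ) by push_cast; field_simp; ring]
      exact Nat.floor_div_natCast _ 2
    set j := ⌊u * 2 ^ (n+1) / t⌋₊ with hjdef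
    have hjle : j ≤ 2 ^ (n+1) := by
      have hle : u * 2 ^ (n+1) / t ≤ ((2 ^ (n+1) : ℕ) : ℝ) := by
        push_cast
        rw [div_le_iff₀ ht]
        nlinarith [pow_pos (show (0:ℝ) < 2 by norm_num) (n+1)]
      calc j ≤ ⌊((2 ^ (n+1) : ℕ) : ℝ)⌋₊ := Nat.floor_le_floor hle
        _ = 2 ^ (n+1) := Nat.floor_natCast _
    have hsplit := Nat.div_add_mod j 2
    rcases Nat.mod_two_eq_zero_or_one j with hmod | hmod
    · -- even: p (n+1) = p n
      obtain ⟨q, hq⟩ : ∃ q, j = 2 * q := ⟨j / 2, by omega⟩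
      have hfl : ⌊u * 2 ^ n / t⌋₊ = q := by omega
      have hpp : p (n+1) = p n := by
        rw [hpe, hpe, hfl, ← hjdef, hq]
        push_cast
        rw [pow_succ]
        ring
      rw [hpp, sub_self, abs_zero]
      exact hx (n+1)
    · -- odd
      obtain ⟨q, hq⟩ : ∃ q, j = 2 * q + 1 := ⟨j / 2, by omega⟩
      have hfl : ⌊u * 2 ^ n / t⌋₊ = q := by omega
      have hk : 2 * q < 2 ^ (n+1) := by omega
      have hb := hgrid (n+1) (2 * q) hk
      have h1 : p n = ((2 * q : ℕ) : ℝ) * t / 2 ^ (n+1) := by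
        rw [hpe, hfl]
        push_cast
        rw [pow_succ]
        ring
      have h2 : p (n+1) = ((2 * q : ℕ) : ℝ) * t / 2 ^ (n+1) + t / 2 ^ (n+1) := by
        rw [hpe, ← hjdef, hq]
        push_cast
        rw [pow_succ]
        ring
      rw [h1, h2, abs_sub_comm]
      exact hb
  have htel : ∀ N, |f (p N) - f (p 0)| ≤ ∑ n ∈ Finset.range N, x (n + 1) := by
    intro N
    induction N with
    | zero => simp
    | succ N ih =>
      calc |f (p (N+1)) - f (p 0)| ≤ |f (p (N+1)) - f (p N)| + |f (p N) - f (p 0)| :=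
            abs_sub_le _ _ _
        _ ≤ x (N+1) + ∑ n ∈ Finset.range N, x (n + 1) := add_le_add (hstep N) ih
        _ = ∑ n ∈ Finset.range (N+1), x (n + 1) := by rw [Finset.sum_range_succ]; ring
  have hmem : ∀ n, p n ∈ Set.Icc (0:ℝ) t := fun n => ⟨hppos n, le_trans (hple n) hut⟩
  have hcw : ContinuousWithinAt f (Set.Icc 0 t) u := hf u ⟨hu0, hut⟩
  have htendw : Tendsto p atTop (nhdsWithin u (Set.Icc 0 t)) :=
    tendsto_nhdsWithin_of_tendsto_nhds_of_eventually_within p htend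
      (Eventually.of_forall hmem)
  have h4 : Tendsto (fun n => f (p n)) atTop (nhds (f u)) := hcw.tendsto.comp htendw
  have h5 : Tendsto (fun N => |f (p N) - f (p 0)|) atTop (nhds (|f u - f (p 0)|)) :=
    ((h4.sub tendsto_const_nhds).abs)
  have h6 := le_of_tendsto h5 (Eventually.of_forall fun N => le_trans (htel N) (hT N))
  rwa [hp0] at h6

/-- **Chaining / modulus of continuity lemma** (Lemma 2.3 of the paper).
If a continuous process `W` on `[0, t]` satisfies the Gaussian-type two-point increment
tail bound `P(|W(s) − W(s+r)| > m √r) ≤ α exp(−β m²)`, then for `m ≥ 20/√β` the maximal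
increment satisfies `P(sup |W(s) − W(s+r)| ≥ m √t) ≤ 2 α exp(−β m²/64)`. -/
theorem chaining_modulus_of_continuity
    {Ω : Type*} [MeasurableSpace Ω] (P : Measure Ω) [IsProbabilityMeasure P]
    (t : ℝ) (ht : 0 < t) (W : ℝ → Ω → ℝ)
    (hcont : ∀ᵐ ω ∂P, ContinuousOn (fun s => W s ω) (Set.Icc 0 t))
    (α β : ℝ) (hα : 0 < α) (hβ : 0 < β)
    (hinc : ∀ m : ℝ, 0 < m → ∀ s r : ℝ, 0 ≤ s → 0 ≤ r → s + r ≤ t →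
      P {ω | m * Real.sqrt r < |W s ω - W (s + r) ω|} ≤
        ENNReal.ofReal (α * Real.exp (-β * m ^ 2)))
    (m : ℝ) (hm : 20 / Real.sqrt β ≤ m) :
    P {ω | m * Real.sqrt t ≤
        ⨆ p : {q : ℝ × ℝ // 0 ≤ q.1 ∧ 0 ≤ q.2 ∧ q.1 + q.2 ≤ t},
          |W p.1.1 ω - W (p.1.1 + p.1.2) ω|} ≤
      ENNReal.ofReal (2 * α * Real.exp (-β * m ^ 2 / 64)) := by
  have hβs : 0 < Real.sqrt β := Real.sqrt_pos.2 hβ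
  have hm0 : 0 < m := lt_of_lt_of_le (by positivity) hm
  have hst : 0 < Real.sqrt t := Real.sqrt_pos.2 ht
  have hβm : 400 ≤ β * m ^ 2 := by
    have h1 : 20 ≤ Real.sqrt β * m := by
      rw [div_le_iff₀ hβs] at hm; linarith [mul_comm m (Real.sqrt β)]
    have h2 : (20:ℝ)^2 ≤ (Real.sqrt β * m)^2 := by nlinarith
    have h3 : Real.sqrt β ^ 2 = β := Real.sq_sqrt hβ.le
    nlinarith
  -- the multipliers
  set μ : ℕ → ℝ := fun n => if n = 0 then m / 8 else (m / 7) * Real.sqrt ((9/8) ^ n) with hμdef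
  have hμ0 : μ 0 = m / 8 := by simp [hμdef]
  have hμs : ∀ n : ℕ, μ (n+1) = (m / 7) * Real.sqrt ((9/8) ^ (n+1)) := by
    intro n; simp [hμdef]
  have hμpos : ∀ n, 0 < μ n := by
    intro n
    cases n with
    | zero => rw [hμ0]; positivity
    | succ k =>
      rw [hμs]
      have : (0:ℝ) < (9/8) ^ (k+1) := by positivity
      positivity
  -- thresholds x n = μ n * sqrt (t / 2^n)
  set x : ℕ → ℝ := fun n => μ n * Real.sqrt (t / 2 ^ n) with hxdef
  have hxnn : ∀ n, 0 ≤ x n := by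
    intro n
    have := (hμpos n).le
    have h2 := Real.sqrt_nonneg (t / 2 ^ n)
    exact mul_nonneg this h2
  have hx0 : x 0 = m / 8 * Real.sqrt t := by
    simp [hxdef, hμ0]
  have hxsucc : ∀ n : ℕ, x (n+1) = (m / 7) * ((3/4) ^ (n+1) * Real.sqrt t) := by
    intro n
    have h1 : x (n+1) = (m/7) * (Real.sqrt ((9/8) ^ (n+1)) * Real.sqrt (t / 2 ^ (n+1))) := by
      rw [hxdef]; simp only []; rw [hμs]; ring
    rw [h1, ← Real.sqrt_mul (by positivity)]
    have h2 : (9/8:ℝ) ^ (n+1) * (t / 2 ^ (n+1)) = ((3/4:ℝ) ^ (n+1)) ^ 2 * t := by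
      have e1 : ((3/4:ℝ) ^ (n+1)) ^ 2 = (9/16:ℝ) ^ (n+1) := by
        rw [← pow_mul, pow_mul']
        norm_num
      rw [e1]
      have e2 : (9/16:ℝ) ^ (n+1) = (9/8:ℝ) ^ (n+1) / 2 ^ (n+1) := by
        rw [← div_pow]; norm_num
      rw [e2]; ring
    rw [h2, Real.sqrt_mul (by positivity), Real.sqrt_sq (by positivity)]
  -- partial geometric sums bound
  have hTsum : ∀ N : ℕ, ∑ n ∈ Finset.range N, x (n + 1) ≤ (3/7) * (m * Real.sqrt t) := by
    intro N
    have hgeo : ∑ n ∈ Finset.range N, (3/4:ℝ) ^ (n+1) ≤ 3 := by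
      have h : ∑ n ∈ Finset.range N, (3/4:ℝ) ^ (n+1)
          = (3/4) * ∑ n ∈ Finset.range N, (3/4:ℝ) ^ n := by
        rw [Finset.mul_sum]
        exact Finset.sum_congr rfl fun n _ => by ring
      rw [h, geom_sum_eq (by norm_num : (3/4:ℝ) ≠ 1)]
      have h1 : (0:ℝ) ≤ (3/4:ℝ) ^ N := by positivity
      have h2 : ((3/4:ℝ) ^ N - 1) / ((3/4:ℝ) - 1) = 4 * (1 - (3/4:ℝ) ^ N) := by ring
      rw [h2]
      nlinarith
    have h : ∑ n ∈ Finset.range N, x (n + 1)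
        = (m/7) * Real.sqrt t * ∑ n ∈ Finset.range N, (3/4:ℝ) ^ (n+1) := by
      rw [Finset.mul_sum]
      exact Finset.sum_congr rfl fun n _ => by rw [hxsucc n]; ring
    rw [h]
    have hc : 0 ≤ (m/7) * Real.sqrt t := by positivity
    nlinarith
  -- the bad events
  set E : ℕ → ℕ → Set Ω := fun n k =>
    {ω | μ n * Real.sqrt (t / 2 ^ n) < |W ((k:ℝ) * t / 2 ^ n) ω - W ((k:ℝ) * t / 2 ^ n + t / 2 ^ n) ω|}
    with hEdef
  set B : Set Ω := ⋃ n, ⋃ k ∈ Finset.range (2 ^ n), E n k with hBdef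
  -- probability of each event
  have hEk : ∀ n k : ℕ, k < 2 ^ n →
      P (E n k) ≤ ENNReal.ofReal (α * Real.exp (-β * μ n ^ 2)) := by
    intro n k hk
    have h2n : (0:ℝ) < 2 ^ n := by positivity
    have hs : (0:ℝ) ≤ (k:ℝ) * t / 2 ^ n := by positivity
    have hr : (0:ℝ) ≤ t / 2 ^ n := by positivity
    have hk1 : ((k:ℝ) + 1) ≤ 2 ^ n := by
      have : ((k+1 : ℕ) : ℝ) ≤ ((2 ^ n : ℕ) : ℝ) := by exact_mod_cast Nat.succ_le_of_lt hk
      push_cast at this; linarith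
    have hsr : (k:ℝ) * t / 2 ^ n + t / 2 ^ n ≤ t := by
      rw [← add_div, div_le_iff₀ h2n]
      nlinarith
    exact hinc (μ n) (hμpos n) ((k:ℝ) * t / 2 ^ n) (t / 2 ^ n) hs hr hsr
  -- inclusion of the target event
  haveI hne : Nonempty {q : ℝ × ℝ // 0 ≤ q.1 ∧ 0 ≤ q.2 ∧ q.1 + q.2 ≤ t} :=
    ⟨⟨(0, 0), by norm_num; exact ht.le⟩⟩
  have hsub : {ω | m * Real.sqrt t ≤
        ⨆ p : {q : ℝ × ℝ // 0 ≤ q.1 ∧ 0 ≤ q.2 ∧ q.1 + q.2 ≤ t},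
          |W p.1.1 ω - W (p.1.1 + p.1.2) ω|} ⊆
      B ∪ {ω | ¬ ContinuousOn (fun s => W s ω) (Set.Icc 0 t)} := by
    intro ω hω
    by_contra hcon
    rw [Set.mem_union] at hcon
    push_neg at hcon
    obtain ⟨hωB, hωc⟩ := hcon
    have hc : ContinuousOn (fun s => W s ω) (Set.Icc 0 t) := not_not.mp hωc
    have hgrid : ∀ n k : ℕ, k < 2 ^ n →
        |W ((k:ℝ) * t / 2 ^ n) ω - W ((k:ℝ) * t / 2 ^ n + t / 2 ^ n) ω| ≤ x n := by
      intro n k hk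
      have hnot : ω ∉ E n k := by
        intro hmem
        exact hωB (Set.mem_iUnion.mpr ⟨n, Set.mem_iUnion₂.mpr ⟨k, Finset.mem_range.mpr hk, hmem⟩⟩)
      have : ¬ (μ n * Real.sqrt (t / 2 ^ n) <
          |W ((k:ℝ) * t / 2 ^ n) ω - W ((k:ℝ) * t / 2 ^ n + t / 2 ^ n) ω|) := hnot
      exact le_of_not_gt this
    have key : ∀ (s r : ℝ), 0 ≤ s → 0 ≤ r → s + r ≤ t →
        |W s ω - W (s + r) ω| ≤ (55/56) * (m * Real.sqrt t) := by
      intro s r hs hr hsrt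
      set f : ℝ → ℝ := fun v => W v ω with hfdef
      have hch1 := chain_det t ht f hc x hxnn ((3/7) * (m * Real.sqrt t)) hTsum hgrid s hs
        (by linarith)
      have hch2 := chain_det t ht f hc x hxnn ((3/7) * (m * Real.sqrt t)) hTsum hgrid (s + r)
        (by linarith) hsrt
      have hd : ∀ v : ℝ, 0 ≤ v → v ≤ t →
          ((⌊v / t⌋₊ : ℝ) * t = 0 ∨ (⌊v / t⌋₊ : ℝ) * t = t) := by
        intro v h0 h1
        rcases lt_or_eq_of_le h1 with h | h
        · left
          have hh : v / t < 1 := (div_lt_one ht).2 h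
          rw [Nat.floor_eq_zero.2 hh]
          simp
        · right
          rw [h, div_self (ne_of_gt ht)]
          norm_num
      have h0t : |f 0 - f t| ≤ x 0 := by
        have hb := hgrid 0 0 (by norm_num)
        norm_num at hb
        exact hb
      have hmid : |f ((⌊s / t⌋₊ : ℝ) * t) - f ((⌊(s + r) / t⌋₊ : ℝ) * t)| ≤ x 0 := by
        rcases hd s hs (by linarith) with h1 | h1 <;>
          rcases hd (s + r) (by linarith) hsrt with h2 | h2 <;> rw [h1, h2]
        · simpa using hxnn 0
        · exact h0t
        · rw [abs_sub_comm]; exact h0t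
        · simpa using hxnn 0
      have t1 := abs_sub_le (f s) (f ((⌊s / t⌋₊ : ℝ) * t)) (f (s + r))
      have t2 := abs_sub_le (f ((⌊s / t⌋₊ : ℝ) * t)) (f ((⌊(s + r) / t⌋₊ : ℝ) * t)) (f (s + r))
      have e1 : |f ((⌊(s + r) / t⌋₊ : ℝ) * t) - f (s + r)|
          = |f (s + r) - f ((⌊(s + r) / t⌋₊ : ℝ) * t)| := abs_sub_comm _ _
      have e2 : m / 8 * Real.sqrt t = (1/8) * (m * Real.sqrt t) := by ring
      rw [hx0, e2] at hmid
      linarith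
    have hsup : (⨆ p : {q : ℝ × ℝ // 0 ≤ q.1 ∧ 0 ≤ q.2 ∧ q.1 + q.2 ≤ t},
        |W p.1.1 ω - W (p.1.1 + p.1.2) ω|) ≤ (55/56) * (m * Real.sqrt t) :=
      ciSup_le fun p => key p.1.1 p.1.2 p.2.1 p.2.2.1 p.2.2.2
    have hωe : m * Real.sqrt t ≤ ⨆ p : {q : ℝ × ℝ // 0 ≤ q.1 ∧ 0 ≤ q.2 ∧ q.1 + q.2 ≤ t},
        |W p.1.1 ω - W (p.1.1 + p.1.2) ω| := hω
    have hpos : 0 < m * Real.sqrt t := by positivity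
    linarith
  -- measure bound
  have hPB : P B ≤ ∑' n : ℕ, ((2 ^ n : ℕ) : ENNReal) * ENNReal.ofReal (α * Real.exp (-β * μ n ^ 2)) := by
    calc P B ≤ ∑' n : ℕ, P (⋃ k ∈ Finset.range (2 ^ n), E n k) := measure_iUnion_le _
      _ ≤ ∑' n : ℕ, ((2 ^ n : ℕ) : ENNReal) * ENNReal.ofReal (α * Real.exp (-β * μ n ^ 2)) := by
        apply ENNReal.tsum_le_tsum
        intro n
        calc P (⋃ k ∈ Finset.range (2 ^ n), E n k)
            ≤ ∑ k ∈ Finset.range (2 ^ n), P (E n k) := measure_biUnion_finset_le _ _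
          _ ≤ ∑ _k ∈ Finset.range (2 ^ n), ENNReal.ofReal (α * Real.exp (-β * μ n ^ 2)) :=
              Finset.sum_le_sum fun k hk => hEk n k (Finset.mem_range.mp hk)
          _ = ((2 ^ n : ℕ) : ENNReal) * ENNReal.ofReal (α * Real.exp (-β * μ n ^ 2)) := by
              rw [Finset.sum_const, Finset.card_range, nsmul_eq_mul]
  -- numeric bound on the series
  have hfinal : (∑' n : ℕ, ((2 ^ n : ℕ) : ENNReal) * ENNReal.ofReal (α * Real.exp (-β * μ n ^ 2)))
      ≤ ENNReal.ofReal (2 * α * Real.exp (-β * m ^ 2 / 64)) := by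
    set c : ℕ → ENNReal := fun n => ((2 ^ n : ℕ) : ENNReal) * ENNReal.ofReal (α * Real.exp (-β * μ n ^ 2)) with hcdef
    set K : ℝ := α * Real.exp (-β * m ^ 2 / 64) with hKdef
    have hKpos : 0 < K := by rw [hKdef]; positivity
    have hc0 : c 0 = ENNReal.ofReal K := by
      have he : -β * μ 0 ^ 2 = -β * m ^ 2 / 64 := by rw [hμ0]; ring
      rw [hcdef]
      simp only [pow_zero, Nat.cast_one, one_mul, he, hKdef]
    have hterm : ∀ n : ℕ, ((2 ^ (n+1) : ℕ) : ℝ) * (α * Real.exp (-β * μ (n+1) ^ 2))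
        ≤ (K * (23/100)) * (73/100) ^ (n+1) := by
      intro n
      have hμ2 : μ (n+1) ^ 2 = m ^ 2 / 49 * (9/8) ^ (n+1) := by
        rw [hμs n, mul_pow, Real.sq_sqrt (by positivity)]
        ring
      have h98 := pow98 (n+1) (by omega)
      have hA : (25/4 : ℝ) ≤ β * m ^ 2 / 64 := by linarith
      have hApos : (0:ℝ) < β * m ^ 2 / 64 := by linarith
      have hNn : (0:ℝ) ≤ ((n:ℝ) + 1) := by positivity
      have hexp : β * m ^ 2 / 64 + 25/14 + 225 * ((n:ℝ)+1) / 196 ≤ β * μ (n+1) ^ 2 := by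
        have h1 : β * μ (n+1) ^ 2 = (β * m ^ 2 / 64) * (64/49) * (9/8) ^ (n+1) := by
          rw [hμ2]; ring
        have hcastN : (63 + 9 * (((n:ℝ)) + 1)) ≤ 64 * (9/8 : ℝ) ^ (n+1) := by
          have := h98
          push_cast at this
          linarith
        have h2 : (β * m ^ 2 / 64) * (63 + 9 * ((n:ℝ)+1)) ≤ (β * m ^ 2 / 64) * (64 * (9/8) ^ (n+1)) :=
          mul_le_mul_of_nonneg_left hcastN hApos.le
        have h3 : (0:ℝ) ≤ ((β * m ^ 2 / 64) - 25/4) * ((14 + 9 * ((n:ℝ)+1)) / 49) :=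
          mul_nonneg (by linarith) (by positivity)
        rw [h1]
        nlinarith
      have e5 : Real.exp (-(β * μ (n+1) ^ 2)) ≤
          Real.exp (-(β * m ^ 2 / 64)) * Real.exp (-(25/14 : ℝ)) * Real.exp (-(225 * ((n:ℝ)+1) / 196)) := by
        rw [← Real.exp_add, ← Real.exp_add]
        apply Real.exp_le_exp.mpr
        linarith
      have e6 : Real.exp (-(25/14 : ℝ)) ≤ 23/100 :=
        exp_neg_le_of _ _ (by norm_num) (by norm_num) (by norm_num)
      have e7 : Real.exp (-(225/196 : ℝ)) ≤ 73/200 :=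
        exp_neg_le_of _ _ (by norm_num) (by norm_num) (by norm_num)
      have e8 : Real.exp (-(225 * ((n:ℝ)+1) / 196)) = Real.exp (-(225/196 : ℝ)) ^ (n+1) := by
        rw [← Real.exp_nat_mul]
        congr 1
        push_cast
        ring
      have hcast : ((2 ^ (n+1) : ℕ) : ℝ) = (2:ℝ) ^ (n+1) := by push_cast; ring
      have h2e3 : (2:ℝ) ^ (n+1) * Real.exp (-(225/196 : ℝ)) ^ (n+1) ≤ (73/100 : ℝ) ^ (n+1) := by
        rw [← mul_pow]
        exact pow_le_pow_left₀ (by positivity) (by linarith) (n+1)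
      calc ((2 ^ (n+1) : ℕ) : ℝ) * (α * Real.exp (-β * μ (n+1) ^ 2))
          ≤ (2:ℝ) ^ (n+1) * (α * (Real.exp (-(β * m ^ 2 / 64)) * Real.exp (-(25/14 : ℝ)) *
              Real.exp (-(225 * ((n:ℝ)+1) / 196)))) := by
            rw [hcast, neg_mul]
            exact mul_le_mul_of_nonneg_left (mul_le_mul_of_nonneg_left e5 hα.le) (by positivity)
        _ = (α * Real.exp (-(β * m ^ 2 / 64))) * (Real.exp (-(25/14 : ℝ)) *
              ((2:ℝ) ^ (n+1) * Real.exp (-(225/196 : ℝ)) ^ (n+1))) := by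
            rw [e8]; ring
        _ ≤ (α * Real.exp (-(β * m ^ 2 / 64))) * ((23/100) * (73/100 : ℝ) ^ (n+1)) := by
            apply mul_le_mul_of_nonneg_left _ (by positivity)
            exact mul_le_mul e6 h2e3 (by positivity) (by norm_num)
        _ = (K * (23/100)) * (73/100) ^ (n+1) := by
            rw [hKdef, show -(β * m ^ 2 / 64) = -β * m ^ 2 / 64 from by ring]
            ring
    have hcsucc : ∀ n : ℕ, c (n+1) ≤ ENNReal.ofReal ((K * (23/100)) * (73/100 : ℝ) ^ (n+1)) := by
      intro n
      have hcc : c (n+1) = ENNReal.ofReal (((2 ^ (n+1) : ℕ) : ℝ) * (α * Real.exp (-β * μ (n+1) ^ 2))) := by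
        rw [hcdef]
        simp only []
        rw [← ENNReal.ofReal_natCast, ← ENNReal.ofReal_mul (by positivity)]
      rw [hcc]
      exact ENNReal.ofReal_le_ofReal (hterm n)
    have hfun : (fun n : ℕ => (K * (23/100)) * (73/100 : ℝ) ^ (n+1))
        = fun n : ℕ => ((K * (23/100)) * (73/100)) * (73/100 : ℝ) ^ n := by
      funext n; ring
    have hsummable : Summable (fun n : ℕ => (K * (23/100)) * (73/100 : ℝ) ^ (n+1)) := by
      rw [hfun]
      exact (summable_geometric_of_lt_one (by norm_num) (by norm_num)).mul_left _
    have htsum_real : (∑' n : ℕ, (K * (23/100)) * (73/100 : ℝ) ^ (n+1)) ≤ K := by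
      rw [hfun, tsum_mul_left, tsum_geometric_of_lt_one (by norm_num) (by norm_num)]
      have hi : ((1:ℝ) - 73/100)⁻¹ = 100/27 := by norm_num
      rw [hi]
      nlinarith [hKpos.le]
    have htail : (∑' n : ℕ, c (n+1)) ≤ ENNReal.ofReal K := by
      calc (∑' n : ℕ, c (n+1)) ≤ ∑' n : ℕ, ENNReal.ofReal ((K * (23/100)) * (73/100 : ℝ) ^ (n+1)) :=
            ENNReal.tsum_le_tsum hcsucc
        _ = ENNReal.ofReal (∑' n : ℕ, (K * (23/100)) * (73/100 : ℝ) ^ (n+1)) :=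
            (ENNReal.ofReal_tsum_of_nonneg (fun n => by positivity) hsummable).symm
        _ ≤ ENNReal.ofReal K := ENNReal.ofReal_le_ofReal htsum_real
    calc (∑' n : ℕ, c n) = c 0 + ∑' n : ℕ, c (n+1) := tsum_eq_zero_add' ENNReal.summable
      _ ≤ ENNReal.ofReal K + ENNReal.ofReal K := add_le_add (le_of_eq hc0) htail
      _ = ENNReal.ofReal (K + K) := (ENNReal.ofReal_add hKpos.le hKpos.le).symm
      _ = ENNReal.ofReal (2 * α * Real.exp (-β * m ^ 2 / 64)) := by
          rw [hKdef]; congr 1; ring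
  calc P {ω | m * Real.sqrt t ≤
        ⨆ p : {q : ℝ × ℝ // 0 ≤ q.1 ∧ 0 ≤ q.2 ∧ q.1 + q.2 ≤ t},
          |W p.1.1 ω - W (p.1.1 + p.1.2) ω|}
      ≤ P (B ∪ {ω | ¬ ContinuousOn (fun s => W s ω) (Set.Icc 0 t)}) := measure_mono hsub
    _ ≤ P B + P {ω | ¬ ContinuousOn (fun s => W s ω) (Set.Icc 0 t)} := measure_union_le _ _
    _ = P B := by rw [ae_iff.mp hcont, add_zero]
    _ ≤ _ := le_trans hPB hfinal
end

section
/- Let λ > 0 and let x, y ≥ 0 satisfy √x + √y ≤ λ. Then the infimum of the Dirichlet energy (1/4)·∫₀^λ |g′(s)|² ds, taken over all absolutely continuous functions g : [0, λ] → ℝ with square-integrable derivative satisfying g(0) = x, g(λ) = y − λ², and g(s) ≥ −s² for all s ∈ [0, λ], is equal to E(x, y, λ) = (2/3)x^{3/2} + (λ − √y)²·√y + (1/3)(λ − √y)³, and this infimum is attained. -/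
open MeasureTheory

/-- The energy functional `E(x, y, λ) = (2/3)x^{3/2} + (λ − √y)²√y + (1/3)(λ − √y)³`. -/
noncomputable def Efun (x y l : ℝ) : ℝ :=
  2 / 3 * x ^ (3 / 2 : ℝ) + (l - Real.sqrt y) ^ 2 * Real.sqrt y +
    1 / 3 * (l - Real.sqrt y) ^ 3

noncomputable def relu (t : ℝ) : ℝ := max t 0

lemma relu_cont : Continuous relu := continuous_id.max continuous_const

lemma relu_nonneg (t : ℝ) : 0 ≤ relu t := le_max_right _ _

lemma relu_of_nonneg {t : ℝ} (h : 0 ≤ t) : relu t = t := max_eq_left h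
lemma relu_of_nonpos {t : ℝ} (h : t ≤ 0) : relu t = 0 := max_eq_right h

lemma hasDerivAt_relu_sq (t : ℝ) : HasDerivAt (fun u => relu u ^ 2) (2 * relu t) t := by
  rcases lt_trichotomy t 0 with h | h | h
  · have : (fun u : ℝ => relu u ^ 2) =ᶠ[nhds t] fun _ => (0:ℝ) := by
      filter_upwards [eventually_lt_nhds h] with u hu
      simp [relu_of_nonpos hu.le]
    rw [relu_of_nonpos h.le]
    simpa using (hasDerivAt_const t (0:ℝ)).congr_of_eventuallyEq this
  · subst h
    rw [hasDerivAt_iff_tendsto]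
    have hb : ∀ u : ℝ, ‖u - 0‖⁻¹ * ‖relu u ^ 2 - relu 0 ^ 2 - (u - 0) • (2 * relu 0)‖ ≤ |u| := by
      intro u
      have h00 : relu (0:ℝ) = 0 := relu_of_nonpos le_rfl
      rw [h00]
      simp only [sub_zero, mul_zero, smul_eq_mul, zero_pow, Real.norm_eq_abs,
        abs_of_nonneg (sq_nonneg (relu u)), ne_eq, OfNat.ofNat_ne_zero, not_false_eq_true]
      rcases eq_or_ne u 0 with rfl | hu
      · simp [relu]
      · have h1 : relu u ^ 2 ≤ |u| * |u| := by
          have h2 : relu u ≤ |u| := by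
            rcases le_or_gt u 0 with h | h
            · simp [relu_of_nonpos h, abs_nonneg]
            · simp [relu_of_nonneg h.le, le_abs_self]
          calc relu u ^ 2 = relu u * relu u := sq (relu u)
            _ ≤ |u| * |u| := mul_le_mul h2 h2 (relu_nonneg u) (abs_nonneg u)
        calc |u|⁻¹ * relu u ^ 2 ≤ |u|⁻¹ * (|u| * |u|) := by
              exact mul_le_mul_of_nonneg_left h1 (by positivity)
          _ = |u| := by
              field_simp [abs_ne_zero.mpr hu]
    have h0 : Filter.Tendsto (fun u : ℝ => |u|) (nhds 0) (nhds 0) := by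
      have := continuous_abs.tendsto (0:ℝ)
      simpa using this
    exact squeeze_zero (fun u => by positivity) hb h0
  · have : (fun u : ℝ => relu u ^ 2) =ᶠ[nhds t] fun u => u ^ 2 := by
      filter_upwards [eventually_gt_nhds h] with u hu
      simp [relu_of_nonneg hu.le]
    rw [relu_of_nonneg h.le]
    simpa [mul_comm] using ((hasDerivAt_pow 2 t)).congr_of_eventuallyEq this

lemma hasDerivAt_relu_cube (t : ℝ) : HasDerivAt (fun u => relu u ^ 3) (3 * relu t ^ 2) t := by
  rcases lt_trichotomy t 0 with h | h | h
  · have heq : (fun u : ℝ => relu u ^ 3) =ᶠ[nhds t] fun _ => (0:ℝ) := by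
      filter_upwards [eventually_lt_nhds h] with u hu
      simp [relu_of_nonpos hu.le]
    rw [relu_of_nonpos h.le]
    simpa using (hasDerivAt_const t (0:ℝ)).congr_of_eventuallyEq heq
  · subst h
    rw [hasDerivAt_iff_tendsto]
    have hb : ∀ u : ℝ, ‖u - 0‖⁻¹ * ‖relu u ^ 3 - relu 0 ^ 3 - (u - 0) • (3 * relu 0 ^ 2)‖ ≤ u ^ 2 := by
      intro u
      have h00 : relu (0:ℝ) = 0 := relu_of_nonpos le_rfl
      rw [h00]
      simp only [sub_zero, smul_eq_mul, Real.norm_eq_abs, ne_eq, OfNat.ofNat_ne_zero,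
        not_false_eq_true, zero_pow, mul_zero, sub_zero]
      rw [abs_of_nonneg (pow_nonneg (relu_nonneg u) 3)]
      rcases eq_or_ne u 0 with rfl | hu
      · simp [relu]
      · have h2 : relu u ≤ |u| := by
          rcases le_or_gt u 0 with h | h
          · simp [relu_of_nonpos h, abs_nonneg]
          · simp [relu_of_nonneg h.le, le_abs_self]
        have h1 : relu u ^ 3 ≤ |u| ^ 3 :=
          pow_le_pow_left₀ (relu_nonneg u) h2 3
        calc |u|⁻¹ * relu u ^ 3 ≤ |u|⁻¹ * |u| ^ 3 :=
              mul_le_mul_of_nonneg_left h1 (by positivity)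
          _ = u ^ 2 := by
              rw [pow_succ' ]
              rw [← mul_assoc, inv_mul_cancel₀ (abs_ne_zero.mpr hu), one_mul, sq_abs]
    have h0 : Filter.Tendsto (fun u : ℝ => u ^ 2) (nhds 0) (nhds 0) := by
      have := (continuous_pow 2).tendsto (0:ℝ)
      simpa using this
    exact squeeze_zero (fun u => by positivity) hb h0
  · have heq : (fun u : ℝ => relu u ^ 3) =ᶠ[nhds t] fun u => u ^ 3 := by
      filter_upwards [eventually_gt_nhds h] with u hu
      simp [relu_of_nonneg hu.le]
    rw [relu_of_nonneg h.le]
    simpa [mul_comm] using ((hasDerivAt_pow 3 t)).congr_of_eventuallyEq heq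

noncomputable def psi (a c : ℝ) (s : ℝ) : ℝ := -2 * (a + relu (s - a) - relu (s - c))

lemma psi_cont (a c : ℝ) : Continuous (psi a c) := by
  exact continuous_const.mul ((continuous_const.add
    (relu_cont.comp (continuous_id.sub continuous_const))).sub
    (relu_cont.comp (continuous_id.sub continuous_const)))

lemma hasDerivAt_relu_sq_shift (a t : ℝ) :
    HasDerivAt (fun u => relu (u - a) ^ 2) (2 * relu (t - a)) t := by
  have := (hasDerivAt_relu_sq (t - a)).comp t ((hasDerivAt_id t).sub_const a)
  simpa [Function.comp_def] using this

lemma hasDerivAt_relu_cube_shift (a t : ℝ) :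
    HasDerivAt (fun u => relu (u - a) ^ 3) (3 * relu (t - a) ^ 2) t := by
  have := (hasDerivAt_relu_cube (t - a)).comp t ((hasDerivAt_id t).sub_const a)
  simpa [Function.comp_def] using this

lemma psi_primitive (a c : ℝ) (ha : 0 ≤ a) (hc : 0 ≤ c) (s : ℝ) :
    ∫ u in (0:ℝ)..s, psi a c u = -2*a*s - relu (s-a)^2 + relu (s-c)^2 := by
  have key : ∀ t : ℝ, HasDerivAt (fun u => -2*a*u - relu (u-a)^2 + relu (u-c)^2)
      (psi a c t) t := by
    intro t
    have h1 : HasDerivAt (fun u : ℝ => -2*a*u) (-2*a) t := by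
      simpa using (hasDerivAt_id t).const_mul (-2*a)
    have := (h1.sub (hasDerivAt_relu_sq_shift a t)).add (hasDerivAt_relu_sq_shift c t)
    refine this.congr_deriv ?_
    unfold psi; ring
  have := intervalIntegral.integral_eq_sub_of_hasDerivAt
    (f := fun u => -2*a*u - relu (u-a)^2 + relu (u-c)^2)
    (fun t _ => key t) ((psi_cont a c).intervalIntegrable 0 s)
  rw [this]
  simp only [relu_of_nonpos (by linarith : (0:ℝ) - a ≤ 0),
    relu_of_nonpos (by linarith : (0:ℝ) - c ≤ 0)]
  ring

lemma psi_sq_eq (a c : ℝ) (hac : a ≤ c) (t : ℝ) :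
    psi a c t ^ 2 = 4*(a^2 + relu (t-a)^2 - relu (t-c)^2 + 2*a*relu (t-a) - 2*c*relu (t-c)) := by
  have hrr : relu (t-a) * relu (t-c) = (t-a) * relu (t-c) := by
    rcases le_or_gt t c with h | h
    · rw [relu_of_nonpos (by linarith : t - c ≤ 0)]; ring
    · rw [relu_of_nonneg (by linarith : 0 ≤ t - a)]
  have hC : relu (t-c) * (relu (t-c) - (t-c)) = 0 := by
    rcases le_or_gt t c with h | h
    · rw [relu_of_nonpos (by linarith : t - c ≤ 0)]; ring
    · rw [relu_of_nonneg (by linarith : 0 ≤ t - c)]; ring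
  unfold psi
  linear_combination (-8:ℝ)*hrr + 8*hC

lemma psi_sq_primitive (a c : ℝ) (ha : 0 ≤ a) (hc : 0 ≤ c) (hac : a ≤ c) (s : ℝ) :
    ∫ u in (0:ℝ)..s, psi a c u ^ 2
      = 4*(a^2*s + relu (s-a)^3/3 - relu (s-c)^3/3 + a*relu (s-a)^2 - c*relu (s-c)^2) := by
  have key : ∀ t : ℝ, HasDerivAt
      (fun u => 4*(a^2*u + relu (u-a)^3/3 - relu (u-c)^3/3 + a*relu (u-a)^2 - c*relu (u-c)^2))
      (psi a c t ^ 2) t := by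
    intro t
    have h1 : HasDerivAt (fun u : ℝ => a^2*u) (a^2) t := by
      simpa using (hasDerivAt_id t).const_mul (a^2)
    have h2 := (hasDerivAt_relu_cube_shift a t).div_const 3
    have h3 := (hasDerivAt_relu_cube_shift c t).div_const 3
    have h4 := (hasDerivAt_relu_sq_shift a t).const_mul a
    have h5 := (hasDerivAt_relu_sq_shift c t).const_mul c
    have := ((((h1.add h2).sub h3).add h4).sub h5).const_mul 4
    refine this.congr_deriv ?_
    rw [psi_sq_eq a c hac t]
    ring
  have := intervalIntegral.integral_eq_sub_of_hasDerivAt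
    (f := fun u => 4*(a^2*u + relu (u-a)^3/3 - relu (u-c)^3/3 + a*relu (u-a)^2 - c*relu (u-c)^2))
    (fun t _ => key t) (((psi_cont a c).pow 2).intervalIntegrable 0 s)
  rw [this]
  simp only [relu_of_nonpos (by linarith : (0:ℝ) - a ≤ 0),
    relu_of_nonpos (by linarith : (0:ℝ) - c ≤ 0)]
  ring

lemma w_eq (a c : ℝ) (hac : a ≤ c) (s : ℝ) :
    relu (s - a) - relu (s - c) = max (min c s - a) 0 := by
  rcases le_total s a with h | h
  · rw [relu_of_nonpos (by linarith : s - a ≤ 0),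
      relu_of_nonpos (by linarith : s - c ≤ 0),
      max_eq_right (by linarith [min_le_right c s] : min c s - a ≤ 0)]
    ring
  · rcases le_total s c with h2 | h2
    · rw [relu_of_nonneg (by linarith : 0 ≤ s - a),
        relu_of_nonpos (by linarith : s - c ≤ 0),
        min_eq_right h2, max_eq_left (by linarith : (0:ℝ) ≤ s - a)]
      ring
    · rw [relu_of_nonneg (by linarith : 0 ≤ s - a),
        relu_of_nonneg (by linarith : 0 ≤ s - c),
        min_eq_left h2, max_eq_left (by linarith : (0:ℝ) ≤ c - a)]
      ring

lemma w_integral (a c : ℝ) (hac : a ≤ c) (s : ℝ) :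
    ∫ t in Set.Ioc a c, (if t ≤ s then (1:ℝ) else 0) = relu (s - a) - relu (s - c) := by
  have : (fun t => if t ≤ s then (1:ℝ) else 0) = Set.indicator (Set.Iic s) (fun _ => (1:ℝ)) := by
    funext t
    simp [Set.indicator_apply, Set.mem_Iic]
  rw [this, setIntegral_indicator measurableSet_Iic, setIntegral_const, smul_eq_mul, mul_one,
    Set.Ioc_inter_Iic, Real.volume_real_Ioc, w_eq a c hac s]

lemma psi_mul_integral (a c l : ℝ) (ha : 0 ≤ a) (hac : a ≤ c) (hcl : c ≤ l)
    (φ : ℝ → ℝ) (hm : Measurable φ) (hint : IntegrableOn φ (Set.Ioc 0 l)) :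
    ∫ s in Set.Ioc 0 l, psi a c s * φ s
      = -2*a*(∫ s in Set.Ioc 0 l, φ s)
        - 2 * ∫ t in Set.Ioc a c, ((∫ s in Set.Ioc 0 l, φ s) - ∫ u in (0:ℝ)..t, φ u) := by
  set J := Set.Ioc (0:ℝ) l with hJ
  set K := Set.Ioc a c with hK
  haveI : IsFiniteMeasure (volume.restrict K) :=
    ⟨by rw [Measure.restrict_apply_univ]; exact measure_Ioc_lt_top⟩
  -- integrability of the weighted part
  have hw_cont : Continuous (fun s => relu (s - a) - relu (s - c)) := by
    exact (relu_cont.comp (continuous_id.sub continuous_const)).sub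
      (relu_cont.comp (continuous_id.sub continuous_const))
  have hw_bdd : ∀ s : ℝ, ‖relu (s - a) - relu (s - c)‖ ≤ c - a := by
    intro s
    rw [Real.norm_eq_abs, w_eq a c hac s, abs_of_nonneg (le_max_right _ _)]
    rcases le_total (min c s - a) 0 with h | h
    · rw [max_eq_right h]; linarith
    · rw [max_eq_left h]; linarith [min_le_left c s]
  have hwφ_int : IntegrableOn (fun s => (relu (s - a) - relu (s - c)) * φ s) J := by
    exact Integrable.bdd_mul hint (hw_cont.aestronglyMeasurable) (Filter.Eventually.of_forall hw_bdd)
  -- Fubini part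
  have key : ∫ s in J, (relu (s - a) - relu (s - c)) * φ s
      = ∫ t in K, ((∫ s in J, φ s) - ∫ u in (0:ℝ)..t, φ u) := by
    have hF_int : Integrable (Function.uncurry fun s t => if t ≤ s then φ s else 0)
        ((volume.restrict J).prod (volume.restrict K)) := by
      have hmeas : Measurable (Function.uncurry fun s t : ℝ => if t ≤ s then φ s else 0) := by
        apply Measurable.ite
        · exact measurableSet_le measurable_snd measurable_fst
        · exact hm.comp measurable_fst
        · exact measurable_const
      apply Integrable.mono' (g := fun p : ℝ × ℝ => |φ p.1| * 1)
      · exact Integrable.mul_prod hint.abs (integrable_const 1)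
      · exact hmeas.aestronglyMeasurable
      · refine Filter.Eventually.of_forall fun p => ?_
        simp only [Function.uncurry, mul_one, Real.norm_eq_abs]
        split
        · exact le_rfl
        · simp [abs_nonneg]
    have swap := integral_integral_swap hF_int
    -- LHS of swap
    have lhs_eq : (∫ s in J, ∫ t in K, (if t ≤ s then φ s else 0))
        = ∫ s in J, (relu (s - a) - relu (s - c)) * φ s := by
      refine integral_congr_ae (Filter.Eventually.of_forall fun s => ?_)
      have : (fun t => if t ≤ s then φ s else 0) = fun t => φ s * (if t ≤ s then (1:ℝ) else 0) := by
        funext t; split <;> ring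
      beta_reduce
      rw [this, integral_const_mul, w_integral a c hac s, mul_comm]
    -- RHS of swap
    have rhs_eq : (∫ t in K, ∫ s in J, (if t ≤ s then φ s else 0))
        = ∫ t in K, ((∫ s in J, φ s) - ∫ u in (0:ℝ)..t, φ u) := by
      refine setIntegral_congr_fun measurableSet_Ioc fun t ht => ?_
      rw [hK] at ht
      have ht0 : 0 < t := lt_of_le_of_lt ha ht.1
      have htl : t ≤ l := le_trans ht.2 hcl
      have : (fun s => if t ≤ s then φ s else 0) = Set.indicator (Set.Ici t) φ := by
        funext s
        simp [Set.indicator_apply, Set.mem_Ici]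
      rw [this, setIntegral_indicator measurableSet_Ici]
      have hJt : J ∩ Set.Ici t = Set.Icc t l := by
        ext s
        simp only [hJ, Set.mem_inter_iff, Set.mem_Ioc, Set.mem_Ici, Set.mem_Icc]
        constructor
        · rintro ⟨⟨_, h2⟩, h3⟩; exact ⟨h3, h2⟩
        · rintro ⟨h1, h2⟩; exact ⟨⟨lt_of_lt_of_le ht0 h1, h2⟩, h1⟩
      rw [hJt, integral_Icc_eq_integral_Ioc]
      have h1 : IntervalIntegrable φ volume 0 l :=
        (intervalIntegrable_iff_integrableOn_Ioc_of_le (le_of_lt (lt_of_lt_of_le ht0 htl))).mpr hint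
      have h2 : IntervalIntegrable φ volume 0 t :=
        (intervalIntegrable_iff_integrableOn_Ioc_of_le ht0.le).mpr
          (hint.mono_set (Set.Ioc_subset_Ioc le_rfl htl))
      have h3 := intervalIntegral.integral_interval_sub_left h1 h2
      rw [← intervalIntegral.integral_of_le htl, ← h3,
        show (∫ s in J, φ s) = ∫ u in (0:ℝ)..l, φ u from
          (intervalIntegral.integral_of_le (by linarith : (0:ℝ) ≤ l)).symm]
    rw [lhs_eq, rhs_eq] at swap
    exact swap
  -- put together
  have expand : ∀ s, psi a c s * φ s
      = -2*a*(φ s) + (-2) * ((relu (s - a) - relu (s - c)) * φ s) := by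
    intro s; unfold psi; ring
  calc ∫ s in J, psi a c s * φ s
      = ∫ s in J, (-2*a*(φ s) + (-2) * ((relu (s - a) - relu (s - c)) * φ s)) := by
        refine integral_congr_ae (Filter.Eventually.of_forall fun s => ?_)
        exact expand s
    _ = (∫ s in J, -2*a*(φ s)) + ∫ s in J, (-2) * ((relu (s - a) - relu (s - c)) * φ s) := by
        exact integral_add (hint.const_mul _) (hwφ_int.const_mul _)
    _ = -2*a*(∫ s in J, φ s) + (-2) * ∫ s in J, (relu (s - a) - relu (s - c)) * φ s := by
        rw [integral_const_mul, integral_const_mul]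
    _ = -2*a*(∫ s in J, φ s) - 2 * ∫ t in K, ((∫ s in J, φ s) - ∫ u in (0:ℝ)..t, φ u) := by
        rw [key]; ring

lemma sq_split (t : ℝ) : t ^ 2 = relu t ^ 2 + relu (-t) ^ 2 := by
  rcases le_total t 0 with h | h
  · rw [relu_of_nonpos h, relu_of_nonneg (by linarith : 0 ≤ -t)]; ring
  · rw [relu_of_nonneg h, relu_of_nonpos (by linarith : -t ≤ 0)]; ring

/-- **The parabola-avoidance variational problem.**
For `λ > 0` and `x, y ≥ 0` with `√x + √y ≤ λ`, the least value of the Dirichlet energy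
`(1/4)∫₀^λ |g′|²` over all absolutely continuous `g` with square-integrable derivative
(encoded as `g(s) = x + ∫₀^s φ` with `φ² ∈ L¹(0, λ)`) satisfying `g(0) = x`,
`g(λ) = y − λ²`, and `g(s) ≥ −s²` on `[0, λ]`, exists and equals `E(x, y, λ)`. -/
theorem parabola_avoidance_energy_isLeast
    (l x y : ℝ) (hl : 0 < l) (hx : 0 ≤ x) (hy : 0 ≤ y)
    (hxy : Real.sqrt x + Real.sqrt y ≤ l) :
    IsLeast { e : ℝ | ∃ φ : ℝ → ℝ, Measurable φ ∧
        IntegrableOn (fun s => φ s ^ 2) (Set.Ioc 0 l) ∧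
        (x + ∫ u in (0 : ℝ)..l, φ u) = y - l ^ 2 ∧
        (∀ s ∈ Set.Icc (0 : ℝ) l, -s ^ 2 ≤ x + ∫ u in (0 : ℝ)..s, φ u) ∧
        e = 1 / 4 * ∫ s in (0 : ℝ)..l, φ s ^ 2 }
      (Efun x y l) := by
  set a := Real.sqrt x with hadef
  set b := Real.sqrt y with hbdef
  set c := l - b with hcdef
  have ha : 0 ≤ a := Real.sqrt_nonneg x
  have hb : 0 ≤ b := Real.sqrt_nonneg y
  have ha2 : a ^ 2 = x := Real.sq_sqrt hx
  have hb2 : b ^ 2 = y := Real.sq_sqrt hy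
  have hac : a ≤ c := by rw [hcdef]; linarith
  have hcl : c ≤ l := by rw [hcdef]; linarith
  have hc0 : 0 ≤ c := le_trans ha hac
  have hal : a ≤ l := le_trans hac hcl
  have hl0 : (0:ℝ) ≤ l := hl.le
  haveI hfin1 : IsFiniteMeasure (volume.restrict (Set.Ioc (0:ℝ) l)) :=
    ⟨by rw [Measure.restrict_apply_univ]; exact measure_Ioc_lt_top⟩
  haveI hfin2 : IsFiniteMeasure (volume.restrict (Set.Ioc a c)) :=
    ⟨by rw [Measure.restrict_apply_univ]; exact measure_Ioc_lt_top⟩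
  -- the value of the energy of psi
  have hxa : x ^ (3/2 : ℝ) = a ^ 3 := by
    rw [hadef, Real.sqrt_eq_rpow, ← Real.rpow_natCast (x ^ ((1:ℝ)/2)) 3,
      ← Real.rpow_mul hx]
    norm_num
  have hEfun : Efun x y l = 1 / 4 * ∫ s in (0:ℝ)..l, psi a c s ^ 2 := by
    rw [psi_sq_primitive a c ha hc0 hac l,
      relu_of_nonneg (by linarith : (0:ℝ) ≤ l - a),
      show l - c = b by rw [hcdef]; ring, relu_of_nonneg hb]
    unfold Efun
    rw [← hbdef, hxa, hcdef]
    ring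
  -- the boundary value of the primitive of psi
  have hpsi_bdry : (x + ∫ u in (0:ℝ)..l, psi a c u) = y - l ^ 2 := by
    rw [psi_primitive a c ha hc0 l,
      relu_of_nonneg (by linarith : (0:ℝ) ≤ l - a),
      show l - c = b by rw [hcdef]; ring, relu_of_nonneg hb]
    linear_combination hb2 - ha2
  constructor
  · -- membership
    refine ⟨psi a c, (psi_cont a c).measurable, ?_, hpsi_bdry, ?_, hEfun⟩
    · exact (((psi_cont a c).pow 2)).integrableOn_Ioc
    · intro s hs
      rw [psi_primitive a c ha hc0 s]
      have h1 : (s - a) ^ 2 = relu (s - a) ^ 2 + relu (a - s) ^ 2 := by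
        have := sq_split (s - a); rw [neg_sub] at this; exact this
      nlinarith [sq_nonneg (relu (a - s)), sq_nonneg (relu (s - c))]
  · -- lower bound
    rintro e ⟨φ, hm, hsq, hbdry, hcon, he⟩
    have hφ_int : IntegrableOn φ (Set.Ioc 0 l) := by
      apply Integrable.mono' (g := fun s => (1 + φ s ^ 2) / 2)
      · exact ((integrable_const 1).add hsq).div_const 2
      · exact (hm.aestronglyMeasurable).restrict
      · refine Filter.Eventually.of_forall fun s => ?_
        rw [Real.norm_eq_abs]
        nlinarith [sq_nonneg (|φ s| - 1), sq_abs (φ s)]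
    have hψ_int : IntegrableOn (psi a c) (Set.Ioc 0 l) := (psi_cont a c).integrableOn_Ioc
    have hψsq_int : IntegrableOn (fun s => psi a c s ^ 2) (Set.Ioc 0 l) :=
      ((psi_cont a c).pow 2).integrableOn_Ioc
    have hψ_bdd : ∀ s : ℝ, ‖psi a c s‖ ≤ 2 * c := by
      intro s
      have hw := w_eq a c hac s
      have hw0 : 0 ≤ relu (s - a) - relu (s - c) := hw ▸ le_max_right _ _
      have hwc : relu (s - a) - relu (s - c) ≤ c - a := by
        rw [hw]
        rcases le_total (min c s - a) 0 with h | h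
        · rw [max_eq_right h]; linarith
        · rw [max_eq_left h]; linarith [min_le_left c s]
      rw [Real.norm_eq_abs]
      unfold psi
      rw [abs_of_nonpos (by nlinarith)]
      linarith
    have hcross : IntegrableOn (fun s => psi a c s * φ s) (Set.Ioc 0 l) :=
      Integrable.bdd_mul hφ_int ((psi_cont a c).aestronglyMeasurable).restrict
        (Filter.Eventually.of_forall hψ_bdd)
    -- cross term bound
    have hD : ∫ s in Set.Ioc (0:ℝ) l, φ s = y - l ^ 2 - x := by
      rw [← intervalIntegral.integral_of_le hl0]; linarith [hbdry]
    have hDψ : ∫ s in Set.Ioc (0:ℝ) l, psi a c s = y - l ^ 2 - x := by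
      rw [← intervalIntegral.integral_of_le hl0]; linarith [hpsi_bdry]
    have hP_cont : ContinuousOn (fun t => ∫ u in (0:ℝ)..t, φ u) (Set.Icc 0 l) := by
      have h0 : IntegrableOn φ (Set.uIcc 0 l) := by
        rw [Set.uIcc_of_le hl0, integrableOn_Icc_iff_integrableOn_Ioc]
        exact hφ_int
      have := intervalIntegral.continuousOn_primitive_interval h0
      rwa [Set.uIcc_of_le hl0] at this
    have hstep2 : (∫ s in Set.Ioc (0:ℝ) l, psi a c s ^ 2)
        ≤ ∫ s in Set.Ioc (0:ℝ) l, psi a c s * φ s := by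
      have e1 := psi_mul_integral a c l ha hac hcl φ hm hφ_int
      have e2 := psi_mul_integral a c l ha hac hcl (psi a c)
        (psi_cont a c).measurable hψ_int
      rw [hD] at e1
      rw [hDψ] at e2
      have hKmono : (∫ t in Set.Ioc a c, ((y - l ^ 2 - x) - ∫ u in (0:ℝ)..t, φ u))
          ≤ ∫ t in Set.Ioc a c, ((y - l ^ 2 - x) + t ^ 2 + x) := by
        refine setIntegral_mono_on ?_ ?_ measurableSet_Ioc ?_
        · apply Integrable.sub (integrable_const _)
          have hc1 : ContinuousOn (fun t => ∫ u in (0:ℝ)..t, φ u) (Set.Icc a c) :=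
            hP_cont.mono (Set.Icc_subset_Icc ha hcl)
          exact (hc1.integrableOn_Icc).mono_set Set.Ioc_subset_Icc_self
        · refine Integrable.add (Integrable.add (integrable_const _) ?_) (integrable_const _)
          exact (continuous_pow 2).integrableOn_Ioc
        · intro t ht
          have ht' : t ∈ Set.Icc (0:ℝ) l :=
            ⟨le_trans ha ht.1.le, le_trans ht.2 hcl⟩
          have := hcon t ht'
          linarith
      have hKeq : (∫ t in Set.Ioc a c, ((y - l ^ 2 - x) - ∫ u in (0:ℝ)..t, psi a c u))
          = ∫ t in Set.Ioc a c, ((y - l ^ 2 - x) + t ^ 2 + x) := by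
        refine setIntegral_congr_fun measurableSet_Ioc fun t ht => ?_
        rw [psi_primitive a c ha hc0 t,
          relu_of_nonneg (by linarith [ht.1] : (0:ℝ) ≤ t - a),
          relu_of_nonpos (by linarith [ht.2] : t - c ≤ 0)]
        linear_combination ha2
      have hsq_eq : (∫ s in Set.Ioc (0:ℝ) l, psi a c s * psi a c s)
          = ∫ s in Set.Ioc (0:ℝ) l, psi a c s ^ 2 := by
        refine integral_congr_ae (Filter.Eventually.of_forall fun s => ?_)
        ring
      rw [← hsq_eq, e2, hKeq, e1]
      linarith [hKmono]
    -- square expansion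
    have hstep1 : 0 ≤ (∫ s in Set.Ioc (0:ℝ) l, φ s ^ 2)
        - 2 * (∫ s in Set.Ioc (0:ℝ) l, psi a c s * φ s)
        + ∫ s in Set.Ioc (0:ℝ) l, psi a c s ^ 2 := by
      have hnn : 0 ≤ ∫ s in Set.Ioc (0:ℝ) l, (φ s - psi a c s) ^ 2 :=
        setIntegral_nonneg measurableSet_Ioc fun s _ => sq_nonneg _
      have i2 : IntegrableOn (fun s => 2 * (psi a c s * φ s)) (Set.Ioc (0:ℝ) l) :=
        hcross.const_mul 2
      have i1 : IntegrableOn (fun s => φ s ^ 2 - 2 * (psi a c s * φ s)) (Set.Ioc (0:ℝ) l) :=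
        hsq.sub i2
      have hexp : (∫ s in Set.Ioc (0:ℝ) l, (φ s - psi a c s) ^ 2)
          = (∫ s in Set.Ioc (0:ℝ) l, φ s ^ 2)
            - 2 * (∫ s in Set.Ioc (0:ℝ) l, psi a c s * φ s)
            + ∫ s in Set.Ioc (0:ℝ) l, psi a c s ^ 2 := by
        calc (∫ s in Set.Ioc (0:ℝ) l, (φ s - psi a c s) ^ 2)
            = ∫ s in Set.Ioc (0:ℝ) l,
                ((φ s ^ 2 - 2 * (psi a c s * φ s)) + psi a c s ^ 2) := by
              refine integral_congr_ae (Filter.Eventually.of_forall fun s => ?_)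
              ring
          _ = (∫ s in Set.Ioc (0:ℝ) l, (φ s ^ 2 - 2 * (psi a c s * φ s)))
              + ∫ s in Set.Ioc (0:ℝ) l, psi a c s ^ 2 := integral_add i1 hψsq_int
          _ = (∫ s in Set.Ioc (0:ℝ) l, φ s ^ 2)
              - 2 * (∫ s in Set.Ioc (0:ℝ) l, psi a c s * φ s)
              + ∫ s in Set.Ioc (0:ℝ) l, psi a c s ^ 2 := by
              rw [integral_sub hsq i2, integral_const_mul]
      linarith [hnn, hexp.le, hexp.ge]
    -- conclude
    rw [he, hEfun, intervalIntegral.integral_of_le hl0, intervalIntegral.integral_of_le hl0]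
    linarith [hstep1, hstep2]
end

section
/- Let λ > 0 and let x, y ≥ 0 satisfy √x + √y ≤ λ. Define g : [0, λ] → ℝ by g(s) = x − 2√x·s for s ∈ [0, √x]; g(s) = −s² for s ∈ [√x, λ − √y]; and g(s) = −(λ − √y)² − 2(λ − √y)·(s − (λ − √y)) for s ∈ [λ − √y, λ]. Then g is well defined (the pieces agree at the junction points), continuous and concave, satisfies g(0) = x, g(λ) = y − λ², g(s) ≥ −s² for all s ∈ [0, λ], and (1/4)·∫₀^λ |g′(s)|² ds = (2/3)x^{3/2} + (λ − √y)²·√y + (1/3)(λ − √y)³. -/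
open MeasureTheory

/-- The explicit minimizer of the parabola-avoidance variational problem: the tangent line
to the parabola `s ↦ −s²` through `(0, x)`, an arc of the parabola, and the tangent line
through `(λ, y − λ²)`. -/
noncomputable def gmin (x y l : ℝ) (s : ℝ) : ℝ :=
  if s ≤ Real.sqrt x then x - 2 * Real.sqrt x * s
  else if s ≤ l - Real.sqrt y then -s ^ 2
  else -(l - Real.sqrt y) ^ 2 - 2 * (l - Real.sqrt y) * (s - (l - Real.sqrt y))

lemma hasDerivAt_sq_max (t : ℝ) : HasDerivAt (fun u : ℝ => max u 0 ^ 2) (2 * max t 0) t := by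
  rcases lt_trichotomy t 0 with h | h | h
  · have heq : (fun u : ℝ => max u 0 ^ 2) =ᶠ[nhds t] fun _ => (0 : ℝ) := by
      filter_upwards [Iio_mem_nhds h] with u hu
      simp [max_eq_right (Set.mem_Iio.mp hu).le]
    have h0 : HasDerivAt (fun _ : ℝ => (0 : ℝ)) 0 t := hasDerivAt_const t 0
    have h1 := h0.congr_of_eventuallyEq heq
    rw [max_eq_right h.le, mul_zero]
    exact h1
  · subst h
    have ho : (fun u : ℝ => u ^ 2) =o[nhds (0:ℝ)] fun u : ℝ => u := by
      have h2 := hasDerivAt_pow 2 (0:ℝ)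
      rw [hasDerivAt_iff_isLittleO] at h2
      simpa using h2
    have key : (fun u : ℝ => max u 0 ^ 2) =o[nhds (0:ℝ)] fun u : ℝ => u := by
      refine Asymptotics.IsBigO.trans_isLittleO ?_ ho
      apply Asymptotics.IsBigO.of_bound 1
      filter_upwards with u
      have h1 : |max u 0| ≤ |u| := by
        rcases le_total u 0 with h | h
        · rw [max_eq_right h]; simp [abs_nonneg]
        · rw [max_eq_left h]
      rw [one_mul, Real.norm_eq_abs, Real.norm_eq_abs, abs_pow, abs_pow]
      gcongr
    rw [hasDerivAt_iff_isLittleO]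
    simpa using key
  · have heq : (fun u : ℝ => max u 0 ^ 2) =ᶠ[nhds t] fun u => u ^ 2 := by
      filter_upwards [Ioi_mem_nhds h] with u hu
      simp [max_eq_left (Set.mem_Ioi.mp hu).le]
    have h0 : HasDerivAt (fun u : ℝ => u ^ 2) (2 * t) t := by
      simpa using hasDerivAt_pow 2 t
    rw [max_eq_left h.le]
    exact h0.congr_of_eventuallyEq heq

lemma hasDerivAt_sq_min (t : ℝ) : HasDerivAt (fun u : ℝ => min u 0 ^ 2) (2 * min t 0) t := by
  have key : (fun u : ℝ => min u 0 ^ 2) = fun u : ℝ => max (-u) 0 ^ 2 := by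
    funext u
    rcases le_total u 0 with h | h
    · rw [min_eq_left h, max_eq_left (by linarith)]; ring
    · rw [min_eq_right h, max_eq_right (by linarith)]
  rw [key]
  have hneg : HasDerivAt (fun u : ℝ => -u) (-1 : ℝ) t := hasDerivAt_neg t
  have := (hasDerivAt_sq_max (-t)).comp t hneg
  refine this.congr_deriv ?_
  rcases le_total t 0 with h | h
  · rw [min_eq_left h, max_eq_left (by linarith)]; ring
  · rw [min_eq_right h, max_eq_right (by linarith)]; ring

lemma gmin_eq (x y l : ℝ) (hx : 0 ≤ x) (hab : Real.sqrt x ≤ l - Real.sqrt y) (s : ℝ) :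
    gmin x y l s = max (s - (l - Real.sqrt y)) 0 ^ 2 + min (s - Real.sqrt x) 0 ^ 2 - s ^ 2 := by
  set a := Real.sqrt x with ha
  set b := l - Real.sqrt y with hb
  have hx2 : a ^ 2 = x := Real.sq_sqrt hx
  unfold gmin
  rw [← ha, ← hb]
  split_ifs with h1 h2
  · rw [max_eq_right (by linarith), min_eq_left (by linarith)]
    nlinarith
  · rw [max_eq_right (by linarith), min_eq_right (by linarith)]
    ring
  · push_neg at h1 h2
    rw [max_eq_left (by linarith), min_eq_right (by linarith)]
    ring

lemma aux_clamp (a b s : ℝ) (hab : a ≤ b) :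
    -2 * min (max s a) b = 2 * max (s - b) 0 + 2 * min (s - a) 0 - 2 * s := by
  rcases le_total s a with h | h
  · rw [max_eq_right h, min_eq_left hab, max_eq_right (by linarith), min_eq_left (by linarith)]
    ring
  · rcases le_total s b with h' | h'
    · rw [max_eq_left h, min_eq_left h', max_eq_right (by linarith), min_eq_right (by linarith)]
      ring
    · rw [max_eq_left h, min_eq_right h', max_eq_left (by linarith), min_eq_right (by linarith)]
      ring

lemma hasDerivAt_gmin (x y l : ℝ) (hx : 0 ≤ x) (hab : Real.sqrt x ≤ l - Real.sqrt y) (s : ℝ) :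
    HasDerivAt (gmin x y l) (-2 * min (max s (Real.sqrt x)) (l - Real.sqrt y)) s := by
  set a := Real.sqrt x with ha
  set b := l - Real.sqrt y with hb
  have h1 : HasDerivAt (fun u : ℝ => max (u - b) 0 ^ 2) (2 * max (s - b) 0) s := by
    have hsub : HasDerivAt (fun u : ℝ => u - b) 1 s := (hasDerivAt_id s).sub_const b
    have := (hasDerivAt_sq_max (s - b)).comp s hsub
    simpa [Function.comp_def] using this
  have h2 : HasDerivAt (fun u : ℝ => min (u - a) 0 ^ 2) (2 * min (s - a) 0) s := by
    have hsub : HasDerivAt (fun u : ℝ => u - a) 1 s := (hasDerivAt_id s).sub_const a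
    have := (hasDerivAt_sq_min (s - a)).comp s hsub
    simpa [Function.comp_def] using this
  have h3 : HasDerivAt (fun u : ℝ => u ^ 2) (2 * s) s := by simpa using hasDerivAt_pow 2 s
  have hcomb := (h1.add h2).sub h3
  have hfun : gmin x y l = fun u => max (u - b) 0 ^ 2 + min (u - a) 0 ^ 2 - u ^ 2 :=
    funext (gmin_eq x y l hx hab)
  rw [hfun, aux_clamp a b s hab]
  exact hcomb

/-- **The explicit parabola-avoidance minimizer and its energy.** For `λ > 0` and
`x, y ≥ 0` with `√x + √y ≤ λ`, the function `gmin x y λ` is continuous and concave on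
`[0, λ]` (in particular its pieces agree at the junction points), satisfies
`g(0) = x`, `g(λ) = y − λ²`, dominates the parabola `s ↦ −s²` on `[0, λ]`, and its
Dirichlet energy `(1/4)∫₀^λ |g′|²` equals `E(x, y, λ)`. -/
theorem gmin_properties (l x y : ℝ) (hl : 0 < l) (hx : 0 ≤ x) (hy : 0 ≤ y)
    (hxy : Real.sqrt x + Real.sqrt y ≤ l) :
    ContinuousOn (gmin x y l) (Set.Icc 0 l) ∧
    ConcaveOn ℝ (Set.Icc 0 l) (gmin x y l) ∧
    gmin x y l 0 = x ∧
    gmin x y l l = y - l ^ 2 ∧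
    (∀ s ∈ Set.Icc (0 : ℝ) l, -s ^ 2 ≤ gmin x y l s) ∧
    1 / 4 * ∫ s in (0 : ℝ)..l, deriv (gmin x y l) s ^ 2 = Efun x y l := by
  have hsy : 0 ≤ Real.sqrt y := Real.sqrt_nonneg y
  have hsx : 0 ≤ Real.sqrt x := Real.sqrt_nonneg x
  set a := Real.sqrt x with ha
  set b := l - Real.sqrt y with hb
  have hab : a ≤ b := by simp only [hb]; linarith
  have hbl : b ≤ l := by simp only [hb]; linarith
  have ha0 : 0 ≤ a := hsx
  have hb0 : 0 ≤ b := le_trans ha0 hab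
  have hal : a ≤ l := le_trans hab hbl
  have hx2 : a ^ 2 = x := Real.sq_sqrt hx
  have hD : ∀ s, HasDerivAt (gmin x y l) (-2 * min (max s a) b) s :=
    fun s => hasDerivAt_gmin x y l hx hab s
  have hderiv : ∀ s, deriv (gmin x y l) s = -2 * min (max s a) b := fun s => (hD s).deriv
  have hcontg : Continuous (gmin x y l) :=
    continuous_iff_continuousAt.mpr fun s => (hD s).continuousAt
  refine ⟨hcontg.continuousOn, ?_, ?_, ?_, ?_, ?_⟩
  · -- concavity
    apply AntitoneOn.concaveOn_of_deriv (convex_Icc 0 l) hcontg.continuousOn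
    · exact fun s _ => ((hD s).differentiableAt).differentiableWithinAt
    · intro s _ t _ hst
      rw [hderiv s, hderiv t]
      have : min (max s a) b ≤ min (max t a) b :=
        min_le_min (max_le_max hst le_rfl) le_rfl
      linarith
  · -- gmin 0 = x
    rw [gmin_eq x y l hx hab 0]
    rw [max_eq_right (by linarith), min_eq_left (by linarith)]
    simpa using hx2
  · -- gmin l = y - l²
    rw [gmin_eq x y l hx hab l]
    rw [max_eq_left (by linarith), min_eq_right (by linarith)]
    have : l - b = Real.sqrt y := by rw [hb]; ring
    rw [this]
    have := Real.sq_sqrt hy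
    nlinarith
  · -- domination
    intro s _
    rw [gmin_eq x y l hx hab s]
    nlinarith [sq_nonneg (max (s - b) 0), sq_nonneg (min (s - a) 0)]
  · -- energy
    set f : ℝ → ℝ := fun s => (-2 * min (max s a) b) ^ 2 with hf
    have hfc : Continuous f := by
      apply Continuous.pow
      exact continuous_const.mul ((continuous_id.max continuous_const).min continuous_const)
    have hi : ∀ u v : ℝ, IntervalIntegrable f volume u v :=
      fun u v => hfc.intervalIntegrable u v
    have heq : (∫ s in (0:ℝ)..l, deriv (gmin x y l) s ^ 2) = ∫ s in (0:ℝ)..l, f s := by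
      apply intervalIntegral.integral_congr
      intro s _
      show deriv (gmin x y l) s ^ 2 = f s
      rw [hderiv s]
    have e1 : (∫ s in (0:ℝ)..b, f s) = (∫ s in (0:ℝ)..a, f s) + ∫ s in a..b, f s :=
      (intervalIntegral.integral_add_adjacent_intervals (hi 0 a) (hi a b)).symm
    have e2 : (∫ s in (0:ℝ)..l, f s) = (∫ s in (0:ℝ)..b, f s) + ∫ s in b..l, f s :=
      (intervalIntegral.integral_add_adjacent_intervals (hi 0 b) (hi b l)).symm
    have p1 : (∫ s in (0:ℝ)..a, f s) = a * (4 * a ^ 2) := by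
      rw [intervalIntegral.integral_congr (g := fun _ : ℝ => (4:ℝ) * a ^ 2) ?_]
      · simp only [intervalIntegral.integral_const, smul_eq_mul, sub_zero]
      · intro s hs
        rw [Set.uIcc_of_le ha0] at hs
        simp only [hf]
        rw [max_eq_right hs.2, min_eq_left hab]
        ring
    have p2 : (∫ s in a..b, f s) = 4 * ((b ^ 3 - a ^ 3) / 3) := by
      rw [intervalIntegral.integral_congr (g := fun s : ℝ => (4:ℝ) * s ^ 2) ?_]
      · rw [intervalIntegral.integral_const_mul]
        rw [integral_pow]
        norm_num
      · intro s hs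
        rw [Set.uIcc_of_le hab] at hs
        simp only [hf]
        rw [max_eq_left hs.1, min_eq_left hs.2]
        ring
    have p3 : (∫ s in b..l, f s) = (l - b) * (4 * b ^ 2) := by
      rw [intervalIntegral.integral_congr (g := fun _ : ℝ => (4:ℝ) * b ^ 2) ?_]
      · simp only [intervalIntegral.integral_const, smul_eq_mul]
      · intro s hs
        rw [Set.uIcc_of_le hbl] at hs
        simp only [hf]
        rw [max_eq_left (le_trans hab hs.1), min_eq_right hs.1]
        ring
    have hx32 : x ^ ((3:ℝ)/2) = a ^ 3 := by
      rw [ha, Real.sqrt_eq_rpow, ← Real.rpow_natCast (x ^ ((1:ℝ)/2)) 3, ← Real.rpow_mul hx]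
      norm_num
    have hyb : Real.sqrt y = l - b := by rw [hb]; ring
    rw [heq, e2, e1, p1, p2, p3]
    simp only [Efun]
    rw [hyb, hx32]
    ring
end

section
/- For every integer n ≥ 1 and every real I ≥ 0, (2^{n/2}·Γ(n/2))^{−1}·∫_I^∞ x^{n/2 − 1}·e^{−x/2} dx ≤ e^{−I/2}·(I/2 + 9)^{(n+1)/2}. Equivalently, a chi-squared random variable with n degrees of freedom satisfies P(χ²_n ≥ I) ≤ e^{−I/2}·(I/2 + 9)^{(n+1)/2}. -/
open MeasureTheory Set

private lemma preimage_addRight_Ioi (c d : ℝ) : (· + d) ⁻¹' (Ioi c) = Ioi (c - d) := by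
  ext x; simp [sub_lt_iff_lt_add]

private lemma shift_Ioi (f : ℝ → ℝ) (c d : ℝ) :
    ∫ x in Ioi c, f x = ∫ x in Ioi (c - d), f (x + d) := by
  have h := (measurePreserving_add_right (volume : Measure ℝ) d).setIntegral_preimage_emb
    (Homeomorph.addRight d).isClosedEmbedding.measurableEmbedding f (Ioi c)
  rw [preimage_addRight_Ioi] at h
  exact h.symm

private lemma shift_Ioi_integrable {f : ℝ → ℝ} {c : ℝ} (d : ℝ)
    (hf : IntegrableOn f (Ioi c)) :
    IntegrableOn (fun x => f (x + d)) (Ioi (c - d)) := by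
  have h := (measurePreserving_add_right (volume : Measure ℝ) d).integrableOn_comp_preimage
    (e := (· + d)) (Homeomorph.addRight d).isClosedEmbedding.measurableEmbedding
    (f := f) (s := Ioi c)
  rw [preimage_addRight_Ioi] at h
  exact h.mpr hf

/-- **Chi-squared tail bound** (from the appendix of the paper). For every `n ≥ 1` and
`I ≥ 0`, a chi-squared random variable with `n` degrees of freedom satisfies
`P(χ²_n ≥ I) = (2^{n/2} Γ(n/2))⁻¹ ∫_I^∞ x^{n/2−1} e^{−x/2} dx ≤ e^{−I/2} (I/2 + 9)^{(n+1)/2}`. -/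
theorem chi_squared_tail_bound (n : ℕ) (hn : 1 ≤ n) (I : ℝ) (hI : 0 ≤ I) :
    (2 ^ ((n : ℝ) / 2) * Real.Gamma ((n : ℝ) / 2))⁻¹ *
        ∫ x in Set.Ioi I, x ^ ((n : ℝ) / 2 - 1) * Real.exp (-x / 2) ≤
      Real.exp (-I / 2) * (I / 2 + 9) ^ (((n : ℝ) + 1) / 2) := by
  have hn1 : (1:ℝ) ≤ (n:ℝ) := by exact_mod_cast hn
  set a : ℝ := (n:ℝ)/2 with ha_def
  set t : ℝ := I/2 with ht_def
  have ha : 0 < a := by rw [ha_def]; linarith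
  have ht : 0 ≤ t := by rw [ht_def]; linarith
  have hΓ : 0 < Real.Gamma a := Real.Gamma_pos_of_pos ha
  have h2a : (0:ℝ) < 2 ^ a := Real.rpow_pos_of_pos two_pos a
  have ht9 : (9:ℝ) ≤ t + 9 := by linarith
  have ht9pos : (0:ℝ) < t + 9 := by linarith
  -- integrability of the Gamma integrand on tails
  have hInt : ∀ s : ℝ, 0 ≤ s →
      IntegrableOn (fun x => x ^ (a - 1) * Real.exp (-x)) (Ioi s) := by
    intro s hs
    exact ((Real.GammaIntegral_convergent ha).mono_set (Ioi_subset_Ioi hs)).congr_fun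
      (fun x _ => mul_comm _ _) measurableSet_Ioi
  -- the Gamma function as integral
  have hΓint : ∫ x in Ioi (0:ℝ), x ^ (a - 1) * Real.exp (-x) = Real.Gamma a := by
    rw [Real.Gamma_eq_integral ha]
    exact setIntegral_congr_fun measurableSet_Ioi fun x _ => mul_comm _ _
  -- Step 1 : substitution x = 2u
  have hstep1 : (∫ x in Ioi I, x ^ (a - 1) * Real.exp (-x / 2))
      = 2 ^ a * ∫ u in Ioi t, u ^ (a - 1) * Real.exp (-u) := by
    have hc := integral_comp_mul_left_Ioi (fun x => x ^ (a - 1) * Real.exp (-x / 2)) t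
      (by norm_num : (0:ℝ) < 2)
    have h2t : 2 * t = I := by rw [ht_def]; ring
    rw [h2t] at hc
    have heq : ∀ x ∈ Ioi t,
        (2*x) ^ (a-1) * Real.exp (-(2*x)/2)
          = 2 ^ (a-1) * (x ^ (a-1) * Real.exp (-x)) := by
      intro x hx
      have hx0 : (0:ℝ) ≤ x := le_trans ht (le_of_lt hx)
      rw [Real.mul_rpow (by norm_num) hx0, show -(2*x)/2 = -x by ring]
      ring
    rw [setIntegral_congr_fun measurableSet_Ioi heq, integral_const_mul, smul_eq_mul] at hc
    have h2aa : (2:ℝ) ^ a = 2 * 2 ^ (a-1) := by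
      rw [show a = 1 + (a - 1) by ring, Real.rpow_add (by norm_num : (0:ℝ) < 2),
        Real.rpow_one]
      ring_nf
    rw [h2aa]
    linarith [hc]
  -- Step 2 : shift u = v + t
  have hshift : (∫ u in Ioi t, u ^ (a-1) * Real.exp (-u))
      = ∫ v in Ioi (0:ℝ), (v + t) ^ (a-1) * Real.exp (-(v + t)) := by
    have h := shift_Ioi (fun u => u ^ (a-1) * Real.exp (-u)) t t
    simpa using h
  set J : ℝ := ∫ v in Ioi (0:ℝ), (v + t) ^ (a-1) * Real.exp (-(v + t)) with hJ_def
  -- reduce goal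
  have hLHS : (2 ^ a * Real.Gamma a)⁻¹ *
      ∫ x in Ioi I, x ^ (a - 1) * Real.exp (-x / 2) = (Real.Gamma a)⁻¹ * J := by
    rw [hstep1, hshift]
    field_simp
  have hexpI : Real.exp (-I/2) = Real.exp (-t) := by rw [ht_def]; ring_nf
  rw [hLHS, hexpI]
  -- case split
  rcases eq_or_lt_of_le hn with h1 | h2
  · -- n = 1, a = 1/2
    have hne : n = 1 := h1.symm
    have haval : a = 1/2 := by rw [ha_def, hne]; norm_num
    have hexp1 : (((n:ℝ) + 1)/2) = 1 := by rw [hne]; norm_num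
    rw [hexp1, Real.rpow_one]
    -- J ≤ exp(-t) * Gamma a
    have hupper : IntegrableOn (fun v => Real.exp (-t) * (v ^ (a-1) * Real.exp (-v)))
        (Ioi (0:ℝ)) := (hInt 0 le_rfl).const_mul _
    have hJle : J ≤ Real.exp (-t) * Real.Gamma a := by
      have hmono : J ≤ ∫ v in Ioi (0:ℝ), Real.exp (-t) * (v ^ (a-1) * Real.exp (-v)) := by
        apply integral_mono_of_nonneg
        · filter_upwards [self_mem_ae_restrict (measurableSet_Ioi : MeasurableSet (Ioi (0:ℝ)))]
            with v hv
          have hv0 : (0:ℝ) < v := hv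
          positivity
        · exact hupper
        · filter_upwards [self_mem_ae_restrict (measurableSet_Ioi : MeasurableSet (Ioi (0:ℝ)))]
            with v hv
          have hv0 : (0:ℝ) < v := hv
          have hb : (v + t) ^ (a-1) ≤ v ^ (a-1) := by
            apply Real.rpow_le_rpow_of_nonpos hv0 (by linarith)
            rw [haval]; norm_num
          have he : Real.exp (-(v + t)) = Real.exp (-t) * Real.exp (-v) := by
            rw [← Real.exp_add]; ring_nf
          rw [he]
          calc (v + t) ^ (a-1) * (Real.exp (-t) * Real.exp (-v))
              ≤ v ^ (a-1) * (Real.exp (-t) * Real.exp (-v)) := by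
                apply mul_le_mul_of_nonneg_right hb; positivity
            _ = Real.exp (-t) * (v ^ (a-1) * Real.exp (-v)) := by ring
      rw [integral_const_mul, hΓint] at hmono
      exact hmono
    have : (Real.Gamma a)⁻¹ * J ≤ Real.exp (-t) := by
      rw [inv_mul_le_iff₀ hΓ]
      linarith [hJle]
    have h19 : (1:ℝ) ≤ t + 9 := by linarith
    nlinarith [Real.exp_pos (-t)]
  · -- n ≥ 2, a ≥ 1
    have ha1 : 1 ≤ a := by
      rw [ha_def]
      have : (2:ℝ) ≤ (n:ℝ) := by exact_mod_cast h2
      linarith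
    set C : ℝ := Real.exp (-t) * (t + 9) ^ (a-1) * Real.exp 1 with hC_def
    have hCpos : 0 < C := by
      rw [hC_def]; positivity
    -- integrability of the dominating function
    have hF1 : IntegrableOn (fun v => (v + 1) ^ (a-1) * Real.exp (-(v+1))) (Ioi (0:ℝ)) := by
      have h := shift_Ioi_integrable (c := 1) 1 (hInt 1 zero_le_one)
      simpa using h
    have hupper : IntegrableOn
        (fun v => C * ((1 + v) ^ (a-1) * Real.exp (-(1 + v)))) (Ioi (0:ℝ)) := by
      have h' : IntegrableOn (fun v => C * ((v + 1) ^ (a-1) * Real.exp (-(v+1))))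
          (Ioi (0:ℝ)) := hF1.const_mul C
      exact h'.congr_fun (fun v _ => by dsimp only; rw [add_comm v 1]) measurableSet_Ioi
    -- pointwise bound
    have hJle : J ≤ ∫ v in Ioi (0:ℝ), C * ((1 + v) ^ (a-1) * Real.exp (-(1 + v))) := by
      apply integral_mono_of_nonneg
      · filter_upwards [self_mem_ae_restrict (measurableSet_Ioi : MeasurableSet (Ioi (0:ℝ)))]
          with v hv
        have hv0 : (0:ℝ) < v := hv
        positivity
      · exact hupper
      · filter_upwards [self_mem_ae_restrict (measurableSet_Ioi : MeasurableSet (Ioi (0:ℝ)))]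
          with v hv
        have hv0 : (0:ℝ) < v := hv
        have hb : (v + t) ^ (a-1) ≤ ((t + 9) * (1 + v)) ^ (a-1) := by
          apply Real.rpow_le_rpow (by linarith) (by nlinarith) (by linarith)
        have hsplit : ((t + 9) * (1 + v)) ^ (a-1)
            = (t + 9) ^ (a-1) * (1 + v) ^ (a-1) :=
          Real.mul_rpow (by linarith) (by linarith)
        have he : Real.exp (-(v + t))
            = Real.exp (-t) * Real.exp 1 * Real.exp (-(1 + v)) := by
          rw [← Real.exp_add, ← Real.exp_add]; ring_nf
        calc (v + t) ^ (a-1) * Real.exp (-(v + t))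
            ≤ ((t + 9) * (1 + v)) ^ (a-1) * Real.exp (-(v + t)) := by
              apply mul_le_mul_of_nonneg_right hb (Real.exp_nonneg _)
          _ = C * ((1 + v) ^ (a-1) * Real.exp (-(1 + v))) := by
              rw [hsplit, he, hC_def]; ring
    -- evaluate the dominating integral
    have hval : (∫ v in Ioi (0:ℝ), C * ((1 + v) ^ (a-1) * Real.exp (-(1 + v))))
        ≤ C * Real.Gamma a := by
      rw [integral_const_mul]
      apply mul_le_mul_of_nonneg_left _ hCpos.le
      have hsh : (∫ w in Ioi (1:ℝ), w ^ (a-1) * Real.exp (-w))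
          = ∫ v in Ioi (0:ℝ), (1 + v) ^ (a-1) * Real.exp (-(1 + v)) := by
        have h := shift_Ioi (fun w => w ^ (a-1) * Real.exp (-w)) 1 1
        simp only [sub_self] at h
        rw [h]
        exact setIntegral_congr_fun measurableSet_Ioi fun v _ => by rw [add_comm v 1]
      rw [← hsh, ← hΓint]
      apply setIntegral_mono_set (hInt 0 le_rfl)
      · filter_upwards [self_mem_ae_restrict (measurableSet_Ioi : MeasurableSet (Ioi (0:ℝ)))]
          with v hv
        have hv0 : (0:ℝ) < v := hv
        positivity
      · exact HasSubset.Subset.eventuallyLE (Ioi_subset_Ioi zero_le_one)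
    have hJle' : J ≤ C * Real.Gamma a := le_trans hJle hval
    have hmain : (Real.Gamma a)⁻¹ * J ≤ C := by
      rw [inv_mul_le_iff₀ hΓ]
      linarith [hJle']
    -- C ≤ exp(-t) * (t+9)^(a + 1/2)
    have hexp27 : Real.exp 1 ≤ (t + 9) ^ ((3:ℝ)/2) := by
      have h927 : (9:ℝ) ^ ((3:ℝ)/2) = 27 := by
        rw [show (9:ℝ) = 3 ^ (2:ℝ) by
            rw [show ((2:ℝ) = ((2:ℕ):ℝ)) by norm_num, Real.rpow_natCast]; norm_num,
          ← Real.rpow_mul (by norm_num : (0:ℝ) ≤ 3)]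
        rw [show (2:ℝ) * (3/2) = ((3:ℕ):ℝ) by norm_num, Real.rpow_natCast]
        norm_num
      have h1 : Real.exp 1 ≤ 27 := by
        have := Real.exp_one_lt_d9
        linarith
      have h2' : (9:ℝ) ^ ((3:ℝ)/2) ≤ (t + 9) ^ ((3:ℝ)/2) :=
        Real.rpow_le_rpow (by norm_num) ht9 (by norm_num)
      linarith [h927 ▸ h2']
    have hCle : C ≤ Real.exp (-t) * (t + 9) ^ (((n:ℝ) + 1)/2) := by
      have hsum : (t + 9) ^ (a-1) * (t + 9) ^ ((3:ℝ)/2)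
          = (t + 9) ^ (((n:ℝ) + 1)/2) := by
        rw [← Real.rpow_add ht9pos]
        congr 1
        rw [ha_def]; ring
      calc C = Real.exp (-t) * ((t + 9) ^ (a-1) * Real.exp 1) := by rw [hC_def]; ring
        _ ≤ Real.exp (-t) * ((t + 9) ^ (a-1) * (t + 9) ^ ((3:ℝ)/2)) := by
            apply mul_le_mul_of_nonneg_left _ (Real.exp_nonneg _)
            apply mul_le_mul_of_nonneg_left hexp27 (Real.rpow_nonneg (by linarith) _)
        _ = Real.exp (-t) * (t + 9) ^ (((n:ℝ) + 1)/2) := by rw [hsum]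
    linarith [hmain, hCle]
end

section
/- Let k ∈ ℕ, t > 0, and let f = (f₁, ..., f_k) be a k-tuple of continuous real-valued functions on [0, t]. Then there exists a unique k-tuple g = (g₁, ..., g_k) of continuous functions on [0, t] (the 'Tetris' of f) such that: (i) g₁(r) ≥ g₂(r) ≥ ... ≥ g_k(r) ≥ 0 for all r ∈ [0, t]; (ii) g_i(r) − g_i(0) = f_i(r) − f_i(0) for all i and all r ∈ [0, t]; and (iii) g is minimal among all tuples satisfying (i) and (ii): if h = (h₁, ..., h_k) is any k-tuple of continuous functions on [0, t] satisfying (i) and (ii), then g_i(r) ≤ h_i(r) for all i ∈ {1, ..., k} and all r ∈ [0, t]. -/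
/-- Auxiliary recursion building the Tetris stack from the bottom:
`trec F k 0 = 0` and `trec F k (j+1)` is the function with the increments of
`F (k-(j+1))` shifted up by the least constant making it `≥ trec F k j`. -/
noncomputable def trec {X : Type*} (F : ℕ → X → ℝ) (k : ℕ) : ℕ → X → ℝ
  | 0 => fun _ => 0
  | (j+1) => fun r => F (k - (j+1)) r +
      sSup (Set.range fun r' => trec F k j r' - F (k - (j+1)) r')

section trecLemmas
set_option linter.unusedSectionVars false

variable {X : Type*} [TopologicalSpace X] [CompactSpace X] [Nonempty X]
  {F : ℕ → X → ℝ} {k : ℕ}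

omit [CompactSpace X] [Nonempty X] in
lemma trec_cont (hF : ∀ n, Continuous (F n)) (j : ℕ) : Continuous (trec F k j) := by
  cases j with
  | zero => exact continuous_const
  | succ j => exact (hF _).add continuous_const

lemma trec_bdd (hF : ∀ n, Continuous (F n)) (j n : ℕ) :
    BddAbove (Set.range fun r' => trec F k j r' - F n r') :=
  (isCompact_range ((trec_cont hF j).sub (hF n))).bddAbove

lemma trec_step (hF : ∀ n, Continuous (F n)) (j : ℕ) (r : X) :
    trec F k j r ≤ trec F k (j+1) r := by
  have h1 : trec F k j r - F (k - (j+1)) r ≤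
      sSup (Set.range fun r' => trec F k j r' - F (k - (j+1)) r') :=
    le_csSup (trec_bdd hF j _) (Set.mem_range_self r)
  simp only [trec]
  linarith

lemma trec_mono (hF : ∀ n, Continuous (F n)) (r : X) : Monotone fun j => trec F k j r :=
  monotone_nat_of_le_succ fun j => trec_step hF j r

lemma trec_nonneg (hF : ∀ n, Continuous (F n)) (j : ℕ) (r : X) : 0 ≤ trec F k j r :=
  trec_mono hF r (Nat.zero_le j)

omit [TopologicalSpace X] [CompactSpace X] [Nonempty X] in
lemma trec_incr (j : ℕ) (r r0 : X) :
    trec F k (j+1) r - trec F k (j+1) r0 = F (k - (j+1)) r - F (k - (j+1)) r0 := by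
  simp only [trec]; ring

end trecLemmas

/-- **Existence and uniqueness of the Tetris map** (the map `T` of the paper). For any
`k`-tuple `f` of continuous functions on `[0, t]` there is a unique `k`-tuple `g` of
continuous functions on `[0, t]` such that: (i) `g₁ ≥ g₂ ≥ … ≥ g_k ≥ 0` pointwise;
(ii) `g` has the same increments as `f`, i.e. `gᵢ(r) − gᵢ(0) = fᵢ(r) − fᵢ(0)`; and
(iii) `g` is pointwise minimal among all `k`-tuples of continuous functions satisfying
(i) and (ii). -/
theorem tetris_exists_unique (k : ℕ) (hk : 0 < k) (t : ℝ) (ht : 0 < t)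
    (f : Fin k → ℝ → ℝ) (hf : ∀ i, ContinuousOn (f i) (Set.Icc 0 t)) :
    ∃! g : Fin k → Set.Icc (0 : ℝ) t → ℝ,
      (∀ i, Continuous (g i)) ∧
      (∀ r, (∀ i j : Fin k, i ≤ j → g j r ≤ g i r) ∧ ∀ i, 0 ≤ g i r) ∧
      (∀ i r, g i r - g i ⟨0, le_refl 0, ht.le⟩ = f i r - f i 0) ∧
      (∀ h : Fin k → Set.Icc (0 : ℝ) t → ℝ,
        (∀ i, Continuous (h i)) →
        (∀ r, (∀ i j : Fin k, i ≤ j → h j r ≤ h i r) ∧ ∀ i, 0 ≤ h i r) →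
        (∀ i r, h i r - h i ⟨0, le_refl 0, ht.le⟩ = f i r - f i 0) →
        ∀ i r, g i r ≤ h i r) := by
  set X := Set.Icc (0 : ℝ) t with hX
  haveI : CompactSpace X := isCompact_iff_compactSpace.mp isCompact_Icc
  haveI : Nonempty X := ⟨⟨0, le_refl 0, ht.le⟩⟩
  set r0 : X := ⟨0, le_refl 0, ht.le⟩ with hr0
  -- index clamping
  have hidx : ∀ n : ℕ, min n (k-1) < k := fun n => by omega
  set idx : ℕ → Fin k := fun n => ⟨min n (k-1), hidx n⟩ with hidxdef
  have idx_eq : ∀ i : Fin k, idx i.val = i := fun i => by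
    apply Fin.ext; simp only [hidxdef]; omega
  set F : ℕ → X → ℝ := fun n r => f (idx n) ↑r - f (idx n) 0 with hFdef
  have hF : ∀ n, Continuous (F n) := fun n =>
    ((hf (idx n)).restrict).sub continuous_const
  have hF0 : ∀ n, F n r0 = 0 := fun n => by simp [hFdef, hr0]
  have idx_idx : ∀ n, idx (idx n).val = idx n := fun n => by
    apply Fin.ext; simp only [hidxdef]; omega
  have hFi : ∀ (i : Fin k) (r : X), F i.val r = f i ↑r - f i 0 := fun i r => by
    simp only [hFdef, idx_eq]
  have hFi' : ∀ n (r : X), F (idx n).val r = F n r := fun n r => by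
    simp only [hFdef, idx_idx]
  set g : Fin k → X → ℝ := fun i => trec F k (k - i.val) with hgdef
  -- continuity
  have gcont : ∀ i, Continuous (g i) := fun i => trec_cont hF _
  -- ordering
  have gord : ∀ r, (∀ i j : Fin k, i ≤ j → g j r ≤ g i r) ∧ ∀ i, 0 ≤ g i r := by
    intro r
    constructor
    · intro i j hij
      exact trec_mono hF r (by omega : k - j.val ≤ k - i.val)
    · intro i; exact trec_nonneg hF _ r
  -- increments
  have gincr : ∀ (i : Fin k) (r : X), g i r - g i r0 = f i ↑r - f i 0 := by
    intro i r
    have hi : i.val < k := i.isLt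
    have hkk : k - i.val = (k - i.val - 1) + 1 := by omega
    have := trec_incr (F := F) (k := k) (k - i.val - 1) r r0
    have hback : k - ((k - i.val - 1) + 1) = i.val := by omega
    rw [hback] at this
    show trec F k (k - i.val) r - trec F k (k - i.val) r0 = _
    rw [hkk, this, hF0, hFi]
    ring
  -- minimality
  have gmin : ∀ h : Fin k → X → ℝ,
      (∀ i, Continuous (h i)) →
      (∀ r, (∀ i j : Fin k, i ≤ j → h j r ≤ h i r) ∧ ∀ i, 0 ≤ h i r) →
      (∀ (i : Fin k) (r : X), h i r - h i r0 = f i ↑r - f i 0) →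
      ∀ i r, g i r ≤ h i r := by
    intro h _hc hord hincr
    -- h expressed via its increments
    have hsplit : ∀ (i : Fin k) (r : X), h i r = h i r0 + F i.val r := by
      intro i r
      have := hincr i r
      simp only [hFdef, idx_eq]
      linarith
    -- main induction
    have key : ∀ j : ℕ, j ≤ k → ∀ r : X, trec F k j r ≤ h (idx (k - j)) r := by
      intro j
      induction j with
      | zero => intro _ r; exact (hord r).2 _
      | succ j ih =>
        intro hjk r
        have hjk' : j ≤ k := by omega
        have ihr := ih hjk'
        -- index of the new level
        have hstep : ∀ r' : X, trec F k j r' - F (k - (j+1)) r' ≤ h (idx (k - (j+1))) r0 := by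
          intro r'
          have h1 : trec F k j r' ≤ h (idx (k - j)) r' := ihr r'
          have h2 : h (idx (k - j)) r' ≤ h (idx (k - (j+1))) r' := by
            apply (hord r').1
            show (idx (k - (j+1))).val ≤ (idx (k - j)).val
            simp only [hidxdef]; omega
          have h3 : h (idx (k - (j+1))) r' = h (idx (k - (j+1))) r0 +
              F (idx (k - (j+1))).val r' := hsplit _ r'
          rw [h3, hFi'] at h2
          linarith
        have hsup : sSup (Set.range fun r' => trec F k j r' - F (k - (j+1)) r') ≤
            h (idx (k - (j+1))) r0 := by
          apply csSup_le (Set.range_nonempty _)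
          rintro x ⟨r', rfl⟩; exact hstep r'
        have hh : h (idx (k - (j+1))) r = h (idx (k - (j+1))) r0 +
            F (idx (k - (j+1))).val r := hsplit _ r
        simp only [trec]
        rw [hh, hFi']
        linarith
    intro i r
    have hi : i.val < k := i.isLt
    have := key (k - i.val) (by omega) r
    have hidxeq : idx (k - (k - i.val)) = i := by
      apply Fin.ext; simp only [hidxdef]; omega
    rw [hidxeq] at this
    exact this
  refine ⟨g, ⟨gcont, gord, gincr, gmin⟩, ?_⟩
  rintro g' ⟨c', o', i', m'⟩
  funext i r
  exact le_antisymm (m' g gcont gord gincr i r) (gmin g' c' o' i' i r)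
end
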